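/- arXiv:1409.0379 — 6 statements merged into one kernel-verified Lean document; each statement's English description precedes it below -/
import Mathlib

section
/- Let 1 < a < ∞ and 0 < b < ∞. There is a constant C = C(a,b) > 0 such that for every sequence (c_k)_{k∈ℤ} of nonnegative real numbers, ∑_{k∈ℤ} ( ∑_{j∈ℤ} a^{-|j-k|} c_j )^b ≤ C ∑_{j∈ℤ} c_j^b. -/
open scoped ENNReal

open MeasureTheory

/-- Geometric series bound over `ℤ`. -/
lemma geom_int_bound {r : ℝ} (h0 : 0 ≤ r) (h1 : r < 1) :
    ∑' m : ℤ, ENNReal.ofReal (r ^ m.natAbs) ≤ ENNReal.ofReal (2 * (1 - r)⁻¹) := by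
  have hsumnat : Summable (fun n : ℕ => r ^ n) := summable_geometric_of_lt_one h0 h1
  have h1' : Summable (fun n : ℕ => r ^ ((n : ℤ)).natAbs) := by simpa using hsumnat
  have h2' : Summable (fun n : ℕ => r ^ (-(n : ℤ)).natAbs) := by simpa using hsumnat
  have hs : Summable (fun m : ℤ => r ^ m.natAbs) := Summable.of_nat_of_neg h1' h2'
  rw [← ENNReal.ofReal_tsum_of_nonneg (fun m => pow_nonneg h0 _) hs]
  apply ENNReal.ofReal_le_ofReal
  have heq := (HasSum.of_nat_of_neg (f := fun m : ℤ => r ^ m.natAbs) h1'.hasSum h2'.hasSum).tsum_eq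
  have hgeo : ∑' n : ℕ, r ^ n = (1 - r)⁻¹ := tsum_geometric_of_lt_one h0 h1
  have hinv : (0:ℝ) ≤ (1 - r)⁻¹ := by
    have : (0:ℝ) < 1 - r := by linarith
    positivity
  have h0le : (0:ℝ) ≤ r ^ (0:ℤ).natAbs := pow_nonneg h0 _
  calc ∑' m : ℤ, r ^ m.natAbs
      = (∑' n : ℕ, r ^ ((n : ℤ)).natAbs) + (∑' n : ℕ, r ^ (-(n : ℤ)).natAbs)
        - r ^ (0:ℤ).natAbs := heq
    _ ≤ (∑' n : ℕ, r ^ ((n : ℤ)).natAbs) + (∑' n : ℕ, r ^ (-(n : ℤ)).natAbs) := by linarith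
    _ = 2 * (1 - r)⁻¹ := by
        simp only [Int.natAbs_natCast, Int.natAbs_neg]
        rw [hgeo]; ring

/-- Subadditivity of `x ^ b` for `0 < b ≤ 1` over countable sums in `ℝ≥0∞`. -/
lemma tsum_rpow_le_of_le_one {b : ℝ} (hb0 : 0 < b) (hb1 : b ≤ 1) (f : ℤ → ℝ≥0∞) :
    (∑' j, f j) ^ b ≤ ∑' j, f j ^ b := by
  set R := ∑' j, f j ^ b with hRdef
  rcases eq_or_ne R ⊤ with hR | hR
  · simp [hR]
  have key : ∀ s : Finset ℤ, (∑ j ∈ s, f j) ^ b ≤ R := by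
    intro s
    calc (∑ j ∈ s, f j) ^ b ≤ ∑ j ∈ s, f j ^ b := by
          induction s using Finset.cons_induction with
          | empty => simp [ENNReal.zero_rpow_of_pos hb0]
          | cons i s hi ih =>
            rw [Finset.sum_cons, Finset.sum_cons]
            exact le_trans (ENNReal.rpow_add_le_add_rpow _ _ hb0.le hb1) (by gcongr)
      _ ≤ R := ENNReal.sum_le_tsum s
  have hsup : (∑' j, f j) ≤ R ^ (1 / b) := by
    rw [ENNReal.tsum_eq_iSup_sum]
    apply iSup_le
    intro s
    have h2 := ENNReal.rpow_le_rpow (key s) (by positivity : (0:ℝ) ≤ 1 / b)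
    rwa [← ENNReal.rpow_mul, mul_one_div, div_self hb0.ne', ENNReal.rpow_one] at h2
  calc (∑' j, f j) ^ b ≤ (R ^ (1 / b)) ^ b := ENNReal.rpow_le_rpow hsup hb0.le
    _ = R := by rw [← ENNReal.rpow_mul, one_div_mul_cancel hb0.ne', ENNReal.rpow_one]

/-- Weighted Jensen/Hölder inequality for `b > 1` over `ℤ`-indexed sums in `ℝ≥0∞`. -/
lemma tsum_weighted_rpow_le {b : ℝ} (hb : 1 < b) (W X : ℤ → ℝ≥0∞) :
    (∑' j, W j * X j) ^ b ≤ (∑' j, W j) ^ (b - 1) * ∑' j, W j * X j ^ b := by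
  have hb0 : (0:ℝ) < b := lt_trans one_pos hb
  set q := Real.conjExponent b with hq
  have hpq : b.HolderConjugate q := Real.HolderConjugate.conjExponent hb
  have hq0 : 0 < q := hpq.symm.pos
  have hbq : (1 / q) * b = b - 1 := by
    rw [one_div_mul_eq_div]
    exact hpq.div_conj_eq_sub_one
  have key : ∑' j, W j * X j
      ≤ (∑' j, W j * X j ^ b) ^ (1 / b) * (∑' j, W j) ^ (1 / q) := by
    have H := ENNReal.lintegral_mul_le_Lp_mul_Lq (Measure.count : Measure ℤ) hpq
      (f := fun j => W j ^ (1 / b) * X j) (g := fun j => W j ^ (1 / q))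
      measurable_from_top.aemeasurable measurable_from_top.aemeasurable
    rw [lintegral_count, lintegral_count, lintegral_count] at H
    have e1 : ∀ j, ((fun j => W j ^ (1 / b) * X j) * fun j => W j ^ (1 / q)) j
        = W j * X j := by
      intro j
      have : W j ^ (1 / b) * X j * W j ^ (1 / q) = (W j ^ (1 / b) * W j ^ (1 / q)) * X j := by
        ring
      rw [Pi.mul_apply, this, ← ENNReal.rpow_add_of_nonneg _ _ (by positivity) (by positivity),
        one_div, one_div, hpq.inv_add_inv_eq_one, ENNReal.rpow_one]
    have e2 : ∀ j, (W j ^ (1 / b) * X j) ^ b = W j * X j ^ b := by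
      intro j
      rw [ENNReal.mul_rpow_of_nonneg _ _ hb0.le, ← ENNReal.rpow_mul, one_div_mul_cancel hb0.ne',
        ENNReal.rpow_one]
    have e3 : ∀ j, (W j ^ (1 / q)) ^ q = W j := by
      intro j
      rw [← ENNReal.rpow_mul, one_div_mul_cancel hq0.ne', ENNReal.rpow_one]
    calc ∑' j, W j * X j = ∑' j, ((fun j => W j ^ (1 / b) * X j) * fun j => W j ^ (1 / q)) j :=
          tsum_congr fun j => (e1 j).symm
      _ ≤ (∑' j, (W j ^ (1 / b) * X j) ^ b) ^ (1 / b) * (∑' j, (W j ^ (1 / q)) ^ q) ^ (1 / q) := H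
      _ = (∑' j, W j * X j ^ b) ^ (1 / b) * (∑' j, W j) ^ (1 / q) := by
          rw [tsum_congr e2, tsum_congr e3]
  calc (∑' j, W j * X j) ^ b
      ≤ ((∑' j, W j * X j ^ b) ^ (1 / b) * (∑' j, W j) ^ (1 / q)) ^ b :=
        ENNReal.rpow_le_rpow key hb0.le
    _ = (∑' j, W j) ^ (b - 1) * ∑' j, W j * X j ^ b := by
        rw [ENNReal.mul_rpow_of_nonneg _ _ hb0.le, ← ENNReal.rpow_mul, ← ENNReal.rpow_mul,
          one_div_mul_cancel hb0.ne', ENNReal.rpow_one, hbq, mul_comm]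

/-- For `1 < a < ∞` and `0 < b < ∞` there is `C = C(a,b) > 0` such that
for every sequence `(c_k)_{k∈ℤ}` of nonnegative reals,
`∑_{k∈ℤ} (∑_{j∈ℤ} a^{-|j-k|} c_j)^b ≤ C ∑_{j∈ℤ} c_j^b`,
the sums being taken in the extended nonnegative reals. -/
theorem summing_lemma (a b : ℝ) (ha : 1 < a) (hb : 0 < b) :
    ∃ C : ℝ, 0 < C ∧ ∀ c : ℤ → ℝ, (∀ j, 0 ≤ c j) →
      ∑' k : ℤ, (∑' j : ℤ, ENNReal.ofReal (a ^ (-|j - k|) * c j)) ^ b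
        ≤ ENNReal.ofReal C * ∑' j : ℤ, ENNReal.ofReal (c j) ^ b := by
  have ha0 : (0:ℝ) < a := lt_trans one_pos ha
  set r := a⁻¹ with hrdef
  have hr0 : (0:ℝ) ≤ r := by positivity
  have hr1 : r < 1 := inv_lt_one_of_one_lt₀ ha
  have hw : ∀ m : ℤ, a ^ (-|m|) = r ^ m.natAbs := by
    intro m
    rw [Int.abs_eq_natAbs, zpow_neg, zpow_natCast, ← inv_pow]
  rcases le_or_gt b 1 with hb1 | hb1
  · -- Case `b ≤ 1`: use subadditivity of `x ^ b`.
    set ρ := r ^ b with hρdef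
    have hρ0 : (0:ℝ) ≤ ρ := Real.rpow_nonneg hr0 b
    have hρ1 : ρ < 1 := Real.rpow_lt_one hr0 hr1 hb
    have h1ρ : (0:ℝ) < 1 - ρ := by linarith
    refine ⟨2 * (1 - ρ)⁻¹, by positivity, ?_⟩
    intro c hc
    calc ∑' k : ℤ, (∑' j : ℤ, ENNReal.ofReal (a ^ (-|j - k|) * c j)) ^ b
        ≤ ∑' k : ℤ, ∑' j : ℤ, (ENNReal.ofReal (a ^ (-|j - k|) * c j)) ^ b :=
          ENNReal.tsum_le_tsum fun k => tsum_rpow_le_of_le_one hb hb1 _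
      _ = ∑' k : ℤ, ∑' j : ℤ, ENNReal.ofReal (ρ ^ (j - k).natAbs) * ENNReal.ofReal (c j) ^ b := by
          refine tsum_congr fun k => tsum_congr fun j => ?_
          rw [hw (j - k), ENNReal.ofReal_mul (pow_nonneg hr0 _),
            ENNReal.mul_rpow_of_nonneg _ _ hb.le,
            ENNReal.ofReal_rpow_of_nonneg (pow_nonneg hr0 _) hb.le]
          have hpow : (r ^ (j - k).natAbs) ^ b = ρ ^ (j - k).natAbs := by
            rw [← Real.rpow_natCast r ((j - k).natAbs), ← Real.rpow_mul hr0,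
              mul_comm (((j - k).natAbs : ℕ) : ℝ) b, Real.rpow_mul hr0, Real.rpow_natCast]
          rw [hpow]
      _ = ∑' j : ℤ, (∑' k : ℤ, ENNReal.ofReal (ρ ^ (j - k).natAbs)) * ENNReal.ofReal (c j) ^ b := by
          rw [ENNReal.tsum_comm]
          exact tsum_congr fun j => ENNReal.tsum_mul_right
      _ ≤ ∑' j : ℤ, ENNReal.ofReal (2 * (1 - ρ)⁻¹) * ENNReal.ofReal (c j) ^ b := by
          refine ENNReal.tsum_le_tsum fun j => ?_
          refine mul_le_mul_left ?_ _
          calc ∑' k : ℤ, ENNReal.ofReal (ρ ^ (j - k).natAbs)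
              = ∑' m : ℤ, ENNReal.ofReal (ρ ^ m.natAbs) :=
                (Equiv.subLeft j).tsum_eq (fun m => ENNReal.ofReal (ρ ^ m.natAbs))
            _ ≤ _ := geom_int_bound hρ0 hρ1
      _ = ENNReal.ofReal (2 * (1 - ρ)⁻¹) * ∑' j : ℤ, ENNReal.ofReal (c j) ^ b :=
          ENNReal.tsum_mul_left
  · -- Case `b > 1`: use the weighted Jensen/Hölder inequality.
    have h1r : (0:ℝ) < 1 - r := by linarith
    set T := 2 * (1 - r)⁻¹ with hTdef
    have hT : (0:ℝ) < T := by positivity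
    refine ⟨T ^ b, Real.rpow_pos_of_pos hT b, ?_⟩
    intro c hc
    have hWle : ∀ k : ℤ, ∑' j : ℤ, ENNReal.ofReal (r ^ (j - k).natAbs) ≤ ENNReal.ofReal T := by
      intro k
      calc ∑' j : ℤ, ENNReal.ofReal (r ^ (j - k).natAbs)
          = ∑' m : ℤ, ENNReal.ofReal (r ^ m.natAbs) :=
            (Equiv.subRight k).tsum_eq (fun m => ENNReal.ofReal (r ^ m.natAbs))
        _ ≤ _ := geom_int_bound hr0 hr1
    have hWle' : ∀ j : ℤ, ∑' k : ℤ, ENNReal.ofReal (r ^ (j - k).natAbs) ≤ ENNReal.ofReal T := by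
      intro j
      calc ∑' k : ℤ, ENNReal.ofReal (r ^ (j - k).natAbs)
          = ∑' m : ℤ, ENNReal.ofReal (r ^ m.natAbs) :=
            (Equiv.subLeft j).tsum_eq (fun m => ENNReal.ofReal (r ^ m.natAbs))
        _ ≤ _ := geom_int_bound hr0 hr1
    calc ∑' k : ℤ, (∑' j : ℤ, ENNReal.ofReal (a ^ (-|j - k|) * c j)) ^ b
        = ∑' k : ℤ, (∑' j : ℤ, ENNReal.ofReal (r ^ (j - k).natAbs) * ENNReal.ofReal (c j)) ^ b := by
          refine tsum_congr fun k => ?_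
          congr 1
          refine tsum_congr fun j => ?_
          rw [hw (j - k), ENNReal.ofReal_mul (pow_nonneg hr0 _)]
      _ ≤ ∑' k : ℤ, ENNReal.ofReal T ^ (b - 1) *
            ∑' j : ℤ, ENNReal.ofReal (r ^ (j - k).natAbs) * ENNReal.ofReal (c j) ^ b := by
          refine ENNReal.tsum_le_tsum fun k => ?_
          refine le_trans (tsum_weighted_rpow_le hb1 _ _) ?_
          exact mul_le_mul_left (ENNReal.rpow_le_rpow (hWle k) (by linarith)) _
      _ = ENNReal.ofReal T ^ (b - 1) *
            ∑' j : ℤ, (∑' k : ℤ, ENNReal.ofReal (r ^ (j - k).natAbs)) * ENNReal.ofReal (c j) ^ b := by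
          rw [ENNReal.tsum_mul_left]
          congr 1
          rw [ENNReal.tsum_comm]
          exact tsum_congr fun j => ENNReal.tsum_mul_right
      _ ≤ ENNReal.ofReal T ^ (b - 1) *
            ∑' j : ℤ, ENNReal.ofReal T * ENNReal.ofReal (c j) ^ b := by
          refine mul_le_mul_right (ENNReal.tsum_le_tsum fun j => ?_) _
          exact mul_le_mul_left (hWle' j) _
      _ = ENNReal.ofReal (T ^ b) * ∑' j : ℤ, ENNReal.ofReal (c j) ^ b := by
          rw [ENNReal.tsum_mul_left, ← mul_assoc]
          congr 1
          have h1 : ENNReal.ofReal T ^ (b - 1) * ENNReal.ofReal T ^ (1:ℝ)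
              = ENNReal.ofReal T ^ b := by
            rw [← ENNReal.rpow_add_of_nonneg _ _ (by linarith) zero_le_one, sub_add_cancel]
          rw [← ENNReal.ofReal_rpow_of_nonneg hT.le hb.le, ← h1, ENNReal.rpow_one]
end

section
/- Let (X,d,μ) be a metric measure space, 0 < s < 1, and let S ⊂ X be a measurable set. Let u : X → ℝ be a measurable function with (g_k)_{k∈ℤ} ∈ 𝔻^s(u), and let φ be a bounded L-Lipschitz function on X supported in S. Then the sequences (ρ_k)_{k∈ℤ} and (h_k)_{k∈ℤ}, where ρ_k = ( g_k ‖φ‖_∞ + 2^{k(s-1)} L |u| ) χ_{supp φ} and h_k = ( g_k + 2^{sk+2} |u| ) ‖φ‖_∞ χ_{supp φ}, are fractional s-gradients of the product uφ. -/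
open MeasureTheory Metric Set
open scoped ENNReal NNReal
noncomputable section

variable {X : Type*} [MetricSpace X] [MeasurableSpace X]

/-- `l^q` norm (`0<q≤∞`, with `q = ⊤` the sup) of a `ℤ`-indexed sequence in `ℝ≥0∞`. -/
def lqNorm (q : ℝ≥0∞) (a : ℤ → ℝ≥0∞) : ℝ≥0∞ :=
  if q = ⊤ then ⨆ k, a k else (∑' k, a k ^ q.toReal) ^ (1 / q.toReal)

/-- `L^p` "norm" (`0<p<∞`) of an `ℝ≥0∞`-valued function. -/
def LpE {X : Type*} [MeasurableSpace X] (μ : Measure X) (p : ℝ) (f : X → ℝ≥0∞) : ℝ≥0∞ :=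
  (∫⁻ x, f x ^ p ∂μ) ^ (1 / p)

/-- `L^p` norm of a real-valued function on the set `S`. -/
def LpS {X : Type*} [MeasurableSpace X] (μ : Measure X) (p : ℝ) (S : Set X) (u : X → ℝ) : ℝ≥0∞ :=
  LpE (μ.restrict S) p fun x => ENNReal.ofReal |u x|

/-- `(g k)_{k ∈ ℤ}` is a fractional `s`-gradient of `u` on `S`. -/
def IsFracGrad (μ : Measure X) (s : ℝ) (S : Set X) (u : X → ℝ) (g : ℤ → X → ℝ) : Prop :=
  (∀ k x, 0 ≤ g k x) ∧ (∀ k, Measurable (g k)) ∧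
    ∃ E : Set X, E ⊆ S ∧ μ E = 0 ∧ ∀ (k : ℤ), ∀ x ∈ S \ E, ∀ y ∈ S \ E,
      (2 : ℝ) ^ (-(k : ℝ) - 1) ≤ dist x y → dist x y < (2 : ℝ) ^ (-(k : ℝ)) →
        |u x - u y| ≤ dist x y ^ s * (g k x + g k y)

/-- The norm `‖(g k)‖_{L^p(S, l^q)}`. -/
def tlGradNorm (μ : Measure X) (p : ℝ) (q : ℝ≥0∞) (S : Set X) (g : ℤ → X → ℝ) : ℝ≥0∞ :=
  LpE (μ.restrict S) p fun x => lqNorm q fun k => ENNReal.ofReal (g k x)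

/-- The norm `‖(g k)‖_{l^q(L^p(S))}`. -/
def besovGradNorm (μ : Measure X) (p : ℝ) (q : ℝ≥0∞) (S : Set X) (g : ℤ → X → ℝ) : ℝ≥0∞ :=
  lqNorm q fun k => LpS μ p S (g k)

/-- The Hajłasz–Triebel–Lizorkin norm `‖u‖_{M^s_{p,q}(S)}`. -/
def TLNorm (μ : Measure X) (s p : ℝ) (q : ℝ≥0∞) (S : Set X) (u : X → ℝ) : ℝ≥0∞ :=
  LpS μ p S u + ⨅ (g : ℤ → X → ℝ) (_ : IsFracGrad μ s S u g), tlGradNorm μ p q S g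

/-- The Hajłasz–Besov norm `‖u‖_{N^s_{p,q}(S)}`. -/
def BesovNorm (μ : Measure X) (s p : ℝ) (q : ℝ≥0∞) (S : Set X) (u : X → ℝ) : ℝ≥0∞ :=
  LpS μ p S u + ⨅ (g : ℤ → X → ℝ) (_ : IsFracGrad μ s S u g), besovGradNorm μ p q S g

/-- `μ` is doubling with constant `cD`. -/
def IsDoubling (μ : Measure X) (cD : ℝ≥0∞) : Prop :=
  ∀ (x : X) (r : ℝ), 0 < r → μ (ball x (2 * r)) ≤ cD * μ (ball x r)

/-- Every ball has positive and finite measure. -/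
def BallsPosFin (μ : Measure X) : Prop :=
  ∀ (x : X) (r : ℝ), 0 < r → 0 < μ (ball x r) ∧ μ (ball x r) < ⊤

/-- The measure density condition for `S` with constant `cm`. -/
def MeasureDensity (μ : Measure X) (S : Set X) (cm : ℝ) : Prop :=
  ∀ x ∈ S, ∀ r : ℝ, 0 < r → r ≤ 1 → ENNReal.ofReal cm * μ (ball x r) ≤ μ (S ∩ ball x r)

/-- `X` is `Q`-regular with constant `cQ`. -/
def QRegular (μ : Measure X) (Q cQ : ℝ) : Prop :=
  1 ≤ cQ ∧ ∀ (x : X) (r : ℝ), 0 < r → ENNReal.ofReal r ≤ EMetric.diam (univ : Set X) →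
    ENNReal.ofReal (cQ⁻¹ * r ^ Q) ≤ μ (ball x r) ∧ μ (ball x r) ≤ ENNReal.ofReal (cQ * r ^ Q)

/-- `X` is geodesic: any two points are joined by an isometric curve. -/
def GeodesicSpace (X : Type*) [MetricSpace X] : Prop :=
  ∀ x y : X, ∃ γ : ℝ → X, γ 0 = x ∧ γ (dist x y) = y ∧
    ∀ a ∈ Icc (0 : ℝ) (dist x y), ∀ b ∈ Icc (0 : ℝ) (dist x y), dist (γ a) (γ b) = |a - b|


/-- Leibniz-type rule: if `(g_k) ∈ 𝔻ˢ(u)` and `φ` is a bounded `L`-Lipschitz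
function supported in `S`, then `(ρ_k)` and `(h_k)`, where
`ρ_k = (g_k ‖φ‖_∞ + 2^{k(s-1)} L |u|) χ_{supp φ}` and
`h_k = (g_k + 2^{sk+2} |u|) ‖φ‖_∞ χ_{supp φ}`, are fractional `s`-gradients of `uφ`. -/
theorem leibniz_fracGrad
    {X : Type*} [MetricSpace X] [MeasurableSpace X] [BorelSpace X] (μ : Measure X)
    (s : ℝ) (hs0 : 0 < s) (hs1 : s < 1) (S : Set X)
    (u φ : X → ℝ) (hu : Measurable u)
    (L : ℝ) (hL : 0 ≤ L) (hφL : ∀ x y, |φ x - φ y| ≤ L * dist x y)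
    (hφb : BddAbove (Set.range fun x => |φ x|))
    (hφS : Function.support φ ⊆ S)
    (g : ℤ → X → ℝ) (hg : IsFracGrad μ s univ u g) :
    IsFracGrad μ s univ (fun x => u x * φ x)
      (fun k => (Function.support φ).indicator
        fun x => g k x * (⨆ y, |φ y|) + (2:ℝ) ^ ((k:ℝ) * (s - 1)) * L * |u x|) ∧
    IsFracGrad μ s univ (fun x => u x * φ x)
      (fun k => (Function.support φ).indicator
        fun x => (g k x + (2:ℝ) ^ (s * (k:ℝ) + 2) * |u x|) * (⨆ y, |φ y|)) := by
  obtain ⟨hg0, hgm, E, -, hE0, hgrad⟩ := hg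
  set M := ⨆ y, |φ y| with hM
  have hMx : ∀ x : X, |φ x| ≤ M := fun x => le_ciSup hφb x
  have hM0 : ∀ x : X, (0:ℝ) ≤ M := fun x => (abs_nonneg _).trans (hMx x)
  have hφc : Continuous φ :=
    (LipschitzWith.of_dist_le_mul (K := ⟨L, hL⟩) fun x y => by
      rw [Real.dist_eq]; exact hφL x y).continuous
  have hsupp : MeasurableSet (Function.support φ) := by
    rw [Function.support_eq_preimage]
    exact hφc.measurable (measurableSet_singleton 0).compl
  constructor
  · refine ⟨fun k x => Set.indicator_nonneg (fun z _ => add_nonneg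
        (mul_nonneg (hg0 k z) (hM0 z))
        (mul_nonneg (mul_nonneg (Real.rpow_pos_of_pos two_pos _).le hL) (abs_nonneg _))) x,
      fun k => Measurable.indicator (((hgm k).mul_const M).add ((hu.abs).const_mul _)) hsupp,
      E, Set.subset_univ E, hE0, ?_⟩
    intro k x hx y hy hd1 hd2
    have hdpos : 0 < dist x y := lt_of_lt_of_le (Real.rpow_pos_of_pos two_pos _) hd1
    have hds : 0 < dist x y ^ s := Real.rpow_pos_of_pos hdpos s
    have hA : (0:ℝ) < 2 ^ ((k:ℝ) * (s - 1)) := Real.rpow_pos_of_pos two_pos _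
    have hgxy := hgrad k x hx y hy hd1 hd2
    have hd5 : dist x y ≤ dist x y ^ s * 2 ^ ((k:ℝ) * (s - 1)) := by
      have h1 : dist x y ^ (1 - s) ≤ (2:ℝ) ^ ((k:ℝ) * (s - 1)) := by
        have h2 := Real.rpow_le_rpow dist_nonneg hd2.le (by linarith : (0:ℝ) ≤ 1 - s)
        rw [← Real.rpow_mul (by norm_num : (0:ℝ) ≤ 2)] at h2
        rwa [show (-(k:ℝ)) * (1 - s) = (k:ℝ) * (s - 1) by ring] at h2
      calc dist x y = dist x y ^ s * dist x y ^ (1 - s) := by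
            rw [← Real.rpow_add hdpos, show s + (1 - s) = (1:ℝ) by ring, Real.rpow_one]
        _ ≤ _ := mul_le_mul_of_nonneg_left h1 hds.le
    by_cases hxs : x ∈ Function.support φ <;> by_cases hys : y ∈ Function.support φ
    · simp only [Set.indicator_of_mem hxs, Set.indicator_of_mem hys]
      have key : |u x * φ x - u y * φ y| ≤ |u x - u y| * |φ x| + |u y| * |φ x - φ y| := by
        calc |u x * φ x - u y * φ y| = |(u x - u y) * φ x + u y * (φ x - φ y)| := by
              congr 1; ring
          _ ≤ |(u x - u y) * φ x| + |u y * (φ x - φ y)| := abs_add_le _ _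
          _ = _ := by rw [abs_mul, abs_mul]
      have t1 : |u x - u y| * |φ x| ≤ dist x y ^ s * (g k x + g k y) * M :=
        mul_le_mul hgxy (hMx x) (abs_nonneg _)
          (mul_nonneg hds.le (add_nonneg (hg0 k x) (hg0 k y)))
      have t2 : |u y| * |φ x - φ y| ≤ |u y| * (L * (dist x y ^ s * 2 ^ ((k:ℝ)*(s-1)))) :=
        mul_le_mul_of_nonneg_left ((hφL x y).trans (mul_le_mul_of_nonneg_left hd5 hL))
          (abs_nonneg _)
      nlinarith [mul_nonneg (mul_nonneg (mul_nonneg hds.le hA.le) hL) (abs_nonneg (u x))]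
    · have hφy : φ y = 0 := Function.notMem_support.mp hys
      simp only [Set.indicator_of_mem hxs, Set.indicator_of_notMem hys, hφy, mul_zero,
        sub_zero, add_zero]
      have key : |u x * φ x| = |u x| * |φ x - φ y| := by rw [hφy, sub_zero, abs_mul]
      rw [key]
      have t2 : |u x| * |φ x - φ y| ≤ |u x| * (L * (dist x y ^ s * 2 ^ ((k:ℝ)*(s-1)))) :=
        mul_le_mul_of_nonneg_left ((hφL x y).trans (mul_le_mul_of_nonneg_left hd5 hL))
          (abs_nonneg _)
      nlinarith [mul_nonneg (mul_nonneg hds.le (hg0 k x)) (hM0 x)]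
    · have hφx : φ x = 0 := Function.notMem_support.mp hxs
      simp only [Set.indicator_of_mem hys, Set.indicator_of_notMem hxs, hφx, mul_zero,
        zero_sub, abs_neg, zero_add]
      have key : |u y * φ y| = |u y| * |φ y - φ x| := by rw [hφx, sub_zero, abs_mul]
      rw [key]
      have t2 : |u y| * |φ y - φ x| ≤ |u y| * (L * (dist x y ^ s * 2 ^ ((k:ℝ)*(s-1)))) := by
        refine mul_le_mul_of_nonneg_left ((hφL y x).trans ?_) (abs_nonneg _)
        rw [dist_comm]
        exact mul_le_mul_of_nonneg_left hd5 hL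
      nlinarith [mul_nonneg (mul_nonneg hds.le (hg0 k y)) (hM0 y)]
    · have hφx : φ x = 0 := Function.notMem_support.mp hxs
      have hφy : φ y = 0 := Function.notMem_support.mp hys
      simp only [Set.indicator_of_notMem hxs, Set.indicator_of_notMem hys, hφx, hφy,
        mul_zero, sub_zero, abs_zero, add_zero]
      positivity
  · refine ⟨fun k x => Set.indicator_nonneg (fun z _ => mul_nonneg (add_nonneg (hg0 k z)
        (mul_nonneg (Real.rpow_pos_of_pos two_pos _).le (abs_nonneg _))) (hM0 z)) x,
      fun k => Measurable.indicator (((hgm k).add ((hu.abs).const_mul _)).mul_const M) hsupp,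
      E, Set.subset_univ E, hE0, ?_⟩
    intro k x hx y hy hd1 hd2
    have hdpos : 0 < dist x y := lt_of_lt_of_le (Real.rpow_pos_of_pos two_pos _) hd1
    have hds : 0 < dist x y ^ s := Real.rpow_pos_of_pos hdpos s
    have hB : (0:ℝ) < 2 ^ (s * (k:ℝ) + 2) := Real.rpow_pos_of_pos two_pos _
    have hgxy := hgrad k x hx y hy hd1 hd2
    have hB2 : (2:ℝ) ≤ dist x y ^ s * 2 ^ (s * (k:ℝ) + 2) := by
      have h1 : (2:ℝ) ^ ((-(k:ℝ) - 1) * s) ≤ dist x y ^ s := by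
        have h2 := Real.rpow_le_rpow (Real.rpow_nonneg (by norm_num : (0:ℝ) ≤ 2) _) hd1 hs0.le
        rwa [← Real.rpow_mul (by norm_num : (0:ℝ) ≤ 2)] at h2
      calc (2:ℝ) = 2 ^ (1:ℝ) := (Real.rpow_one 2).symm
        _ ≤ 2 ^ (2 - s) := Real.rpow_le_rpow_of_exponent_le one_le_two (by linarith)
        _ = 2 ^ ((-(k:ℝ) - 1) * s) * 2 ^ (s * (k:ℝ) + 2) := by
            rw [← Real.rpow_add (by norm_num : (0:ℝ) < 2)]
            congr 1; ring
        _ ≤ dist x y ^ s * 2 ^ (s * (k:ℝ) + 2) := mul_le_mul_of_nonneg_right h1 hB.le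
    by_cases hxs : x ∈ Function.support φ <;> by_cases hys : y ∈ Function.support φ
    · simp only [Set.indicator_of_mem hxs, Set.indicator_of_mem hys]
      have key : |u x * φ x - u y * φ y| ≤ |u x - u y| * |φ x| + |u y| * |φ x - φ y| := by
        calc |u x * φ x - u y * φ y| = |(u x - u y) * φ x + u y * (φ x - φ y)| := by
              congr 1; ring
          _ ≤ |(u x - u y) * φ x| + |u y * (φ x - φ y)| := abs_add_le _ _
          _ = _ := by rw [abs_mul, abs_mul]
      have t1 : |u x - u y| * |φ x| ≤ dist x y ^ s * (g k x + g k y) * M :=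
        mul_le_mul hgxy (hMx x) (abs_nonneg _)
          (mul_nonneg hds.le (add_nonneg (hg0 k x) (hg0 k y)))
      have t2 : |u y| * |φ x - φ y| ≤ |u y| * (M + M) := by
        refine mul_le_mul_of_nonneg_left ((abs_sub _ _).trans ?_) (abs_nonneg _)
        exact add_le_add (hMx x) (hMx y)
      have t3 : |u y| * M * 2 ≤ |u y| * M * (dist x y ^ s * 2 ^ (s * (k:ℝ) + 2)) :=
        mul_le_mul_of_nonneg_left hB2 (mul_nonneg (abs_nonneg _) (hM0 y))
      nlinarith [mul_nonneg (mul_nonneg (mul_nonneg hds.le hB.le) (abs_nonneg (u x))) (hM0 x)]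
    · have hφy : φ y = 0 := Function.notMem_support.mp hys
      simp only [Set.indicator_of_mem hxs, Set.indicator_of_notMem hys, hφy, mul_zero,
        sub_zero, add_zero]
      rw [abs_mul]
      have t1 : |u x| * |φ x| ≤ |u x| * M := mul_le_mul_of_nonneg_left (hMx x) (abs_nonneg _)
      have t3 : |u x| * M * 2 ≤ |u x| * M * (dist x y ^ s * 2 ^ (s * (k:ℝ) + 2)) :=
        mul_le_mul_of_nonneg_left hB2 (mul_nonneg (abs_nonneg _) (hM0 x))
      nlinarith [mul_nonneg (mul_nonneg hds.le (hg0 k x)) (hM0 x),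
        mul_nonneg (abs_nonneg (u x)) (hM0 x)]
    · have hφx : φ x = 0 := Function.notMem_support.mp hxs
      simp only [Set.indicator_of_mem hys, Set.indicator_of_notMem hxs, hφx, mul_zero,
        zero_sub, abs_neg, zero_add]
      rw [abs_mul]
      have t1 : |u y| * |φ y| ≤ |u y| * M := mul_le_mul_of_nonneg_left (hMx y) (abs_nonneg _)
      have t3 : |u y| * M * 2 ≤ |u y| * M * (dist x y ^ s * 2 ^ (s * (k:ℝ) + 2)) :=
        mul_le_mul_of_nonneg_left hB2 (mul_nonneg (abs_nonneg _) (hM0 y))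
      nlinarith [mul_nonneg (mul_nonneg hds.le (hg0 k y)) (hM0 y),
        mul_nonneg (abs_nonneg (u y)) (hM0 y)]
    · have hφx : φ x = 0 := Function.notMem_support.mp hxs
      have hφy : φ y = 0 := Function.notMem_support.mp hys
      simp only [Set.indicator_of_notMem hxs, Set.indicator_of_notMem hys, hφx, hφy,
        mul_zero, sub_zero, abs_zero, add_zero]
      positivity


end
end

section
/- Let (X,d,μ) be a metric measure space, 0 < s < 1, 0 < p < ∞, 0 < q ≤ ∞, and let S ⊂ X be a measurable set. Let φ be a bounded L-Lipschitz function on X supported in S. Then there is a constant C > 0, depending only on p, q, s, L and ‖φ‖_∞, such that for every u ∈ M^s_{p,q}(S) (extended by zero outside S) the product uφ belongs to M^s_{p,q}(X) and ‖uφ‖_{M^s_{p,q}(X)} ≤ C ‖u‖_{M^s_{p,q}(S)}. The same statement holds with M^s_{p,q} replaced by N^s_{p,q}. -/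
open MeasureTheory Metric Set
open scoped ENNReal NNReal
noncomputable section

variable {X : Type*} [MetricSpace X] [MeasurableSpace X]

section HTLhelp
set_option linter.unusedSectionVars false
set_option linter.unusedVariables false
namespace HTL

lemma rpow_add_le {t : ℝ} (ht : 0 < t) (A B : ℝ≥0∞) :
    (A + B) ^ t ≤ 2 ^ t * (A ^ t + B ^ t) := by
  have h1 : A + B ≤ 2 * max A B := by
    rw [two_mul]; exact add_le_add (le_max_left _ _) (le_max_right _ _)
  calc (A + B) ^ t ≤ (2 * max A B) ^ t := ENNReal.rpow_le_rpow h1 ht.le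
    _ = 2 ^ t * (max A B) ^ t := ENNReal.mul_rpow_of_nonneg _ _ ht.le
    _ ≤ 2 ^ t * (A ^ t + B ^ t) := by
        gcongr
        rcases le_total A B with h | h
        · rw [max_eq_right h]; exact le_add_self
        · rw [max_eq_left h]; exact self_le_add_right _ _

lemma lq_mono {q : ℝ≥0∞} {a b : ℤ → ℝ≥0∞} (h : ∀ k, a k ≤ b k) : lqNorm q a ≤ lqNorm q b := by
  unfold lqNorm
  split_ifs
  · exact iSup_mono h
  · exact ENNReal.rpow_le_rpow
      (ENNReal.tsum_le_tsum fun k => ENNReal.rpow_le_rpow (h k) ENNReal.toReal_nonneg)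
      (by positivity)

lemma lq_zero {q : ℝ≥0∞} (hq : 0 < q) : lqNorm q (fun _ => 0) = 0 := by
  unfold lqNorm
  split_ifs with h
  · simp
  · have ht : 0 < q.toReal := ENNReal.toReal_pos hq.ne' h
    rw [tsum_congr fun k => ENNReal.zero_rpow_of_pos ht, tsum_zero,
      ENNReal.zero_rpow_of_pos (by positivity)]

lemma lq_const_mul {q : ℝ≥0∞} (hq : 0 < q) (c : ℝ≥0∞) (a : ℤ → ℝ≥0∞) :
    lqNorm q (fun k => c * a k) = c * lqNorm q a := by
  unfold lqNorm
  split_ifs with h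
  · exact (ENNReal.mul_iSup c a).symm
  · have ht : 0 < q.toReal := ENNReal.toReal_pos hq.ne' h
    simp_rw [ENNReal.mul_rpow_of_nonneg _ _ ht.le, ENNReal.tsum_mul_left]
    rw [ENNReal.mul_rpow_of_nonneg _ _ (by positivity : (0:ℝ) ≤ 1 / q.toReal),
      ← ENNReal.rpow_mul, mul_one_div_cancel ht.ne', ENNReal.rpow_one]

lemma lq_mul_const {q : ℝ≥0∞} (hq : 0 < q) (c : ℝ≥0∞) (a : ℤ → ℝ≥0∞) :
    lqNorm q (fun k => a k * c) = lqNorm q a * c := by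
  simp_rw [mul_comm (a _) c, lq_const_mul hq, mul_comm]

lemma lq_add_le {q : ℝ≥0∞} (hq : 0 < q) (a b : ℤ → ℝ≥0∞) :
    lqNorm q (fun k => a k + b k) ≤ 2 * 2 ^ (1 / q.toReal) * (lqNorm q a + lqNorm q b) := by
  unfold lqNorm
  split_ifs with h
  · have : (⨆ k, a k + b k) ≤ (⨆ k, a k) + ⨆ k, b k :=
      iSup_le fun k => add_le_add (le_iSup a k) (le_iSup b k)
    refine this.trans ?_
    subst h
    simp only [ENNReal.toReal_top, div_zero, ENNReal.rpow_zero, mul_one]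
    exact le_mul_of_one_le_left (by positivity) one_le_two
  · have ht : 0 < q.toReal := ENNReal.toReal_pos hq.ne' h
    set t := q.toReal with htdef
    have step1 : (∑' k, (a k + b k) ^ t) ≤ 2 ^ t * ((∑' k, a k ^ t) + ∑' k, b k ^ t) := by
      calc (∑' k, (a k + b k) ^ t) ≤ ∑' k, 2 ^ t * (a k ^ t + b k ^ t) :=
            ENNReal.tsum_le_tsum fun k => rpow_add_le ht _ _
        _ = 2 ^ t * ((∑' k, a k ^ t) + ∑' k, b k ^ t) := by
            rw [ENNReal.tsum_mul_left, ENNReal.tsum_add]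
    calc (∑' k, (a k + b k) ^ t) ^ (1/t)
        ≤ (2 ^ t * ((∑' k, a k ^ t) + ∑' k, b k ^ t)) ^ (1/t) :=
          ENNReal.rpow_le_rpow step1 (by positivity)
      _ = 2 * ((∑' k, a k ^ t) + ∑' k, b k ^ t) ^ (1/t) := by
          rw [ENNReal.mul_rpow_of_nonneg _ _ (by positivity : (0:ℝ) ≤ 1/t),
            ← ENNReal.rpow_mul, mul_one_div_cancel ht.ne', ENNReal.rpow_one]
      _ ≤ 2 * (2 ^ (1/t) * ((∑' k, a k ^ t) ^ (1/t) + (∑' k, b k ^ t) ^ (1/t))) := by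
          gcongr
          exact rpow_add_le (by positivity) _ _
      _ = 2 * 2 ^ (1/t) * ((∑' k, a k ^ t) ^ (1/t) + (∑' k, b k ^ t) ^ (1/t)) :=
          (mul_assoc _ _ _).symm

lemma LpE_mono {μ : Measure X} {p : ℝ} (hp : 0 < p) {f g : X → ℝ≥0∞} (h : ∀ x, f x ≤ g x) :
    LpE μ p f ≤ LpE μ p g :=
  ENNReal.rpow_le_rpow (lintegral_mono fun x => ENNReal.rpow_le_rpow (h x) hp.le) (by positivity)

lemma LpE_const_mul {μ : Measure X} {p : ℝ} (hp : 0 < p) {c : ℝ≥0∞} (hc : c ≠ ⊤)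
    (f : X → ℝ≥0∞) : LpE μ p (fun x => c * f x) = c * LpE μ p f := by
  unfold LpE
  simp_rw [ENNReal.mul_rpow_of_nonneg _ _ hp.le]
  rw [lintegral_const_mul' _ _ (ENNReal.rpow_ne_top_of_nonneg hp.le hc),
    ENNReal.mul_rpow_of_nonneg _ _ (by positivity : (0:ℝ) ≤ 1/p),
    ← ENNReal.rpow_mul, mul_one_div_cancel hp.ne', ENNReal.rpow_one]

lemma LpE_add_le {μ : Measure X} {p : ℝ} (hp : 0 < p) {f : X → ℝ≥0∞} (hf : Measurable f)
    (g : X → ℝ≥0∞) :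
    LpE μ p (fun x => f x + g x) ≤ 2 * 2 ^ (1/p) * (LpE μ p f + LpE μ p g) := by
  unfold LpE
  have step1 : (∫⁻ x, (f x + g x) ^ p ∂μ) ≤ 2 ^ p * ((∫⁻ x, f x ^ p ∂μ) + ∫⁻ x, g x ^ p ∂μ) := by
    calc (∫⁻ x, (f x + g x) ^ p ∂μ) ≤ ∫⁻ x, 2 ^ p * (f x ^ p + g x ^ p) ∂μ :=
          lintegral_mono fun x => rpow_add_le hp _ _
      _ = 2 ^ p * ((∫⁻ x, f x ^ p ∂μ) + ∫⁻ x, g x ^ p ∂μ) := by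
          rw [lintegral_const_mul' _ _ (ENNReal.rpow_ne_top_of_nonneg hp.le (by norm_num)),
            lintegral_add_left (f := fun x => f x ^ p) (ENNReal.continuous_rpow_const.measurable.comp hf)]
  calc (∫⁻ x, (f x + g x) ^ p ∂μ) ^ (1/p)
      ≤ (2 ^ p * ((∫⁻ x, f x ^ p ∂μ) + ∫⁻ x, g x ^ p ∂μ)) ^ (1/p) :=
        ENNReal.rpow_le_rpow step1 (by positivity)
    _ = 2 * ((∫⁻ x, f x ^ p ∂μ) + ∫⁻ x, g x ^ p ∂μ) ^ (1/p) := by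
        rw [ENNReal.mul_rpow_of_nonneg _ _ (by positivity : (0:ℝ) ≤ 1/p),
          ← ENNReal.rpow_mul, mul_one_div_cancel hp.ne', ENNReal.rpow_one]
    _ ≤ 2 * (2 ^ (1/p) * ((∫⁻ x, f x ^ p ∂μ) ^ (1/p) + (∫⁻ x, g x ^ p ∂μ) ^ (1/p))) := by
        gcongr
        exact rpow_add_le (by positivity) _ _
    _ = 2 * 2 ^ (1/p) * ((∫⁻ x, f x ^ p ∂μ) ^ (1/p) + (∫⁻ x, g x ^ p ∂μ) ^ (1/p)) :=
        (mul_assoc _ _ _).symm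

lemma lq_measurable {q : ℝ≥0∞} {F : ℤ → X → ℝ≥0∞} (hF : ∀ k, Measurable (F k)) :
    Measurable fun x => lqNorm q (fun k => F k x) := by
  unfold lqNorm
  split_ifs
  · exact Measurable.iSup hF
  · exact ENNReal.continuous_rpow_const.measurable.comp
      (Measurable.ennreal_tsum fun k => ENNReal.continuous_rpow_const.measurable.comp (hF k))

lemma lintegral_indicator_rpow {μ : Measure X} {p : ℝ} (hp : 0 < p) {S : Set X}
    (hS : MeasurableSet S) (w : X → ℝ≥0∞) :
    ∫⁻ x, (S.indicator w x) ^ p ∂μ = ∫⁻ x in S, w x ^ p ∂μ := by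
  rw [← lintegral_indicator hS]
  congr 1; funext x
  by_cases hx : x ∈ S
  · simp [hx]
  · simp [hx, ENNReal.zero_rpow_of_pos hp]

lemma LpE_indicator {μ : Measure X} {p : ℝ} (hp : 0 < p) {S : Set X} (hS : MeasurableSet S)
    (w : X → ℝ≥0∞) : LpE μ p (fun x => S.indicator w x) = LpE (μ.restrict S) p w := by
  unfold LpE; rw [lintegral_indicator_rpow hp hS]

lemma lq_geom_ne_top {q : ℝ≥0∞} (hq : 0 < q) {A m : ℝ} (hA : 0 < A) (hm : 0 < m) :
    lqNorm q (fun k => ENNReal.ofReal (A * (2:ℝ) ^ (-(m * (k.natAbs : ℝ))))) ≠ ⊤ := by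
  unfold lqNorm
  split_ifs with h
  · refine ne_top_of_le_ne_top (ENNReal.ofReal_ne_top (r := A)) (iSup_le fun k => ?_)
    refine ENNReal.ofReal_le_ofReal ?_
    have h1 : (2:ℝ) ^ (-(m * (k.natAbs:ℝ))) ≤ 1 :=
      Real.rpow_le_one_of_one_le_of_nonpos one_le_two (neg_nonpos.mpr (by positivity))
    nlinarith
  · have ht : 0 < q.toReal := ENNReal.toReal_pos hq.ne' h
    set t := q.toReal with htdef
    set ρ := (2:ℝ) ^ (-(m * t)) with hρdef
    have hρ0 : 0 ≤ ρ := (Real.rpow_pos_of_pos two_pos _).le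
    have hρ1 : ρ < 1 := Real.rpow_lt_one_of_one_lt_of_neg one_lt_two (by
      have : 0 < m * t := mul_pos hm ht
      linarith)
    have hnat : ∀ n : ℕ, (A * (2:ℝ) ^ (-(m * (n:ℝ)))) ^ t = A ^ t * ρ ^ n := by
      intro n
      rw [Real.mul_rpow hA.le (Real.rpow_pos_of_pos two_pos _).le]
      congr 1
      rw [← Real.rpow_natCast ρ n, hρdef, ← Real.rpow_mul two_pos.le,
        ← Real.rpow_mul two_pos.le]
      ring_nf
    have hsum : Summable (fun k : ℤ => (A * (2:ℝ) ^ (-(m * (k.natAbs:ℝ)))) ^ t) := by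
      apply Summable.of_nat_of_neg
      · simpa [Int.natAbs_natCast] using
          (summable_geometric_of_lt_one hρ0 hρ1).mul_left (A ^ t) |>.congr
            (fun n => (hnat n).symm)
      · simpa [Int.natAbs_neg, Int.natAbs_natCast] using
          (summable_geometric_of_lt_one hρ0 hρ1).mul_left (A ^ t) |>.congr
            (fun n => (hnat n).symm)
    have hnn : ∀ k : ℤ, 0 ≤ (A * (2:ℝ) ^ (-(m * (k.natAbs:ℝ)))) ^ t := fun k => by positivity
    have heq : (∑' k : ℤ, ENNReal.ofReal (A * (2:ℝ) ^ (-(m * (k.natAbs:ℝ)))) ^ t)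
        = ENNReal.ofReal (∑' k : ℤ, (A * (2:ℝ) ^ (-(m * (k.natAbs:ℝ)))) ^ t) := by
      rw [ENNReal.ofReal_tsum_of_nonneg hnn hsum]
      exact tsum_congr fun k => ENNReal.ofReal_rpow_of_nonneg (by positivity) ht.le
    rw [heq]
    exact ENNReal.rpow_ne_top_of_nonneg (by positivity) ENNReal.ofReal_ne_top



lemma isFracGrad_mul (μ : Measure X) {s : ℝ} (hs0 : 0 < s) (hs1 : s < 1)
    {S : Set X} (hS : MeasurableSet S) {φ : X → ℝ} {L Mr : ℝ} (hL : 0 ≤ L)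
    (hφL : ∀ x y, |φ x - φ y| ≤ L * dist x y) (hM : ∀ x, |φ x| ≤ Mr) (hM0 : 0 ≤ Mr)
    (hφS : Function.support φ ⊆ S) {u : X → ℝ} (hu : Measurable u)
    {g : ℤ → X → ℝ} (hg : IsFracGrad μ s S u g) :
    IsFracGrad μ s univ (fun x => S.indicator u x * φ x)
      (fun k x => Mr * S.indicator (g k) x +
        (2*(Mr+L+1)) * (2:ℝ) ^ (-(min s (1-s) * (k.natAbs : ℝ))) * |S.indicator u x|) := by
  obtain ⟨hgpos, hgmeas, E, hES, hE0, hEgrad⟩ := hg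
  have hm0 : 0 < min s (1-s) := lt_min hs0 (by linarith)
  have hms : min s (1-s) ≤ s := min_le_left _ _
  have hm1s : min s (1-s) ≤ 1 - s := min_le_right _ _
  have hA : 0 < 2*(Mr+L+1) := by linarith
  refine ⟨?_, ?_, E, hES.trans (subset_univ S), hE0, ?_⟩
  · intro k x
    have h1 : 0 ≤ S.indicator (g k) x := Set.indicator_nonneg (fun y _ => hgpos k y) x
    have h2 : (0:ℝ) < (2:ℝ) ^ (-(min s (1-s) * (k.natAbs : ℝ))) := Real.rpow_pos_of_pos two_pos _
    positivity
  · intro k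
    exact (measurable_const.mul ((hgmeas k).indicator hS)).add
      (measurable_const.mul ((hu.indicator hS).abs))
  · intro k x hx y hy hd1 hd2
    set m := min s (1-s) with hmdef
    set d := dist x y with hddef
    have hd0 : 0 < d := lt_of_lt_of_le (Real.rpow_pos_of_pos two_pos _) hd1
    have hds : 0 < d ^ s := Real.rpow_pos_of_pos hd0 s
    have hlow : (2:ℝ) ^ ((-(k:ℝ) - 1) * s) ≤ d ^ s := by
      rw [Real.rpow_mul two_pos.le]
      exact Real.rpow_le_rpow (Real.rpow_pos_of_pos two_pos _).le hd1 hs0.le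
    have hup : d ^ (1 - s) ≤ (2:ℝ) ^ (-(k:ℝ) * (1 - s)) := by
      rw [Real.rpow_mul two_pos.le]
      exact Real.rpow_le_rpow hd0.le hd2.le (by linarith)
    have habs : ∀ z : X, |S.indicator u z * φ z| ≤ Mr * |S.indicator u z| := by
      intro z
      rw [abs_mul, mul_comm]
      exact mul_le_mul_of_nonneg_right (hM z) (abs_nonneg _)
    rcases le_or_gt k 0 with hk | hk
    · -- large distances: trivial estimate
      have hkr : (k:ℝ) ≤ 0 := by exact_mod_cast hk
      have hna : ((k.natAbs : ℕ) : ℝ) = -(k:ℝ) := by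
        rw [Nat.cast_natAbs, Int.cast_abs]; exact abs_of_nonpos hkr
      beta_reduce
      rw [hna]
      have hmaster : |S.indicator u x * φ x - S.indicator u y * φ y|
          ≤ Mr * (|S.indicator u x| + |S.indicator u y|) := by
        calc |S.indicator u x * φ x - S.indicator u y * φ y|
            ≤ |S.indicator u x * φ x| + |S.indicator u y * φ y| := abs_sub _ _
          _ ≤ Mr * |S.indicator u x| + Mr * |S.indicator u y| := add_le_add (habs x) (habs y)
          _ = Mr * (|S.indicator u x| + |S.indicator u y|) := (mul_add _ _ _).symm
      have hcoef : Mr ≤ d ^ s * (2*(Mr+L+1) * (2:ℝ) ^ (-(m * -(k:ℝ)))) := by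
        have e1 : (2:ℝ) ^ ((-(k:ℝ) - 1) * s) * (2:ℝ) ^ (-(m * -(k:ℝ)))
            = (2:ℝ) ^ ((-(k:ℝ) - 1) * s + -(m * -(k:ℝ))) := (Real.rpow_add two_pos _ _).symm
        have e2 : (-1:ℝ) ≤ (-(k:ℝ) - 1) * s + -(m * -(k:ℝ)) := by
          nlinarith [mul_nonneg (neg_nonneg.mpr hkr) (sub_nonneg.mpr hms)]
        have e3 : (2:ℝ) ^ (-1:ℝ) ≤ (2:ℝ) ^ ((-(k:ℝ) - 1) * s + -(m * -(k:ℝ))) :=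
          Real.rpow_le_rpow_of_exponent_le one_le_two e2
        have e4 : (2:ℝ) ^ (-1:ℝ) = 1/2 := by
          rw [Real.rpow_neg_one]; norm_num
        calc Mr ≤ 2*(Mr+L+1) * (1/2) := by linarith
          _ ≤ 2*(Mr+L+1) * (2:ℝ) ^ ((-(k:ℝ) - 1) * s + -(m * -(k:ℝ))) := by
              rw [← e4]; exact mul_le_mul_of_nonneg_left e3 hA.le
          _ = (2:ℝ) ^ ((-(k:ℝ) - 1) * s) * (2*(Mr+L+1) * (2:ℝ) ^ (-(m * -(k:ℝ)))) := by
              rw [← e1]; ring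
          _ ≤ d ^ s * (2*(Mr+L+1) * (2:ℝ) ^ (-(m * -(k:ℝ)))) := by
              have : (0:ℝ) ≤ 2*(Mr+L+1) * (2:ℝ) ^ (-(m * -(k:ℝ))) := by positivity
              exact mul_le_mul_of_nonneg_right hlow this
      have hgx : 0 ≤ Mr * S.indicator (g k) x :=
        mul_nonneg hM0 (Set.indicator_nonneg (fun z _ => hgpos k z) x)
      have hgy : 0 ≤ Mr * S.indicator (g k) y :=
        mul_nonneg hM0 (Set.indicator_nonneg (fun z _ => hgpos k z) y)
      have hT : 0 ≤ |S.indicator u x| + |S.indicator u y| := by positivity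
      calc |S.indicator u x * φ x - S.indicator u y * φ y|
          ≤ Mr * (|S.indicator u x| + |S.indicator u y|) := hmaster
        _ ≤ (d ^ s * (2*(Mr+L+1) * (2:ℝ) ^ (-(m * -(k:ℝ)))))
              * (|S.indicator u x| + |S.indicator u y|) :=
            mul_le_mul_of_nonneg_right hcoef hT
        _ = d ^ s * ((2*(Mr+L+1) * (2:ℝ) ^ (-(m * -(k:ℝ)))) * |S.indicator u x|
              + (2*(Mr+L+1) * (2:ℝ) ^ (-(m * -(k:ℝ)))) * |S.indicator u y|) := by ring
        _ ≤ d ^ s * ((Mr * S.indicator (g k) x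
                + 2*(Mr+L+1) * (2:ℝ) ^ (-(m * -(k:ℝ))) * |S.indicator u x|)
              + (Mr * S.indicator (g k) y
                + 2*(Mr+L+1) * (2:ℝ) ^ (-(m * -(k:ℝ))) * |S.indicator u y|)) := by
            apply mul_le_mul_of_nonneg_left _ hds.le
            nlinarith [hgx, hgy]
    · -- small distances
      have hkr : (0:ℝ) ≤ (k:ℝ) := by exact_mod_cast hk.le
      have hna : ((k.natAbs : ℕ) : ℝ) = (k:ℝ) := by
        rw [Nat.cast_natAbs, Int.cast_abs]; exact abs_of_nonneg hkr
      beta_reduce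
      rw [hna]
      have hLd : L * d ≤ d ^ s * (2*(Mr+L+1) * (2:ℝ) ^ (-(m * (k:ℝ)))) := by
        have hd1s : d ^ s * d ^ (1-s) = d := by
          rw [← Real.rpow_add hd0]; norm_num
        have h25 : (2:ℝ) ^ (-(k:ℝ) * (1-s)) ≤ (2:ℝ) ^ (-(m * (k:ℝ))) := by
          apply Real.rpow_le_rpow_of_exponent_le one_le_two
          nlinarith [mul_le_mul_of_nonneg_right hm1s hkr]
        have e0 : L * d = d ^ s * (L * d ^ (1-s)) := by
          conv_lhs => rw [← hd1s]
          ring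
        calc L * d = d ^ s * (L * d ^ (1-s)) := e0
          _ ≤ d ^ s * (L * (2:ℝ) ^ (-(k:ℝ) * (1-s))) := by
              apply mul_le_mul_of_nonneg_left _ hds.le
              exact mul_le_mul_of_nonneg_left hup hL
          _ ≤ d ^ s * (2*(Mr+L+1) * (2:ℝ) ^ (-(m * (k:ℝ)))) := by
              apply mul_le_mul_of_nonneg_left _ hds.le
              apply mul_le_mul (by linarith) h25 (by positivity) (by linarith)
      have hmaster : |S.indicator u x * φ x - S.indicator u y * φ y|
          ≤ d ^ s * (Mr * S.indicator (g k) x + Mr * S.indicator (g k) y)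
            + L * d * (|S.indicator u x| + |S.indicator u y|) := by
        by_cases hxS : x ∈ S <;> by_cases hyS : y ∈ S
        · have key := hEgrad k x ⟨hxS, hx.2⟩ y ⟨hyS, hy.2⟩ hd1 hd2
          rw [Set.indicator_of_mem hxS, Set.indicator_of_mem hyS,
            Set.indicator_of_mem hxS, Set.indicator_of_mem hyS]
          have split : u x * φ x - u y * φ y = φ x * (u x - u y) + u y * (φ x - φ y) := by ring
          calc |u x * φ x - u y * φ y|
              ≤ |φ x * (u x - u y)| + |u y * (φ x - φ y)| := by rw [split]; exact abs_add_le _ _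
            _ = |φ x| * |u x - u y| + |u y| * |φ x - φ y| := by rw [abs_mul, abs_mul]
            _ ≤ Mr * (d ^ s * (g k x + g k y)) + |u y| * (L * d) := by
                apply add_le_add
                · exact mul_le_mul (hM x) key (abs_nonneg _) hM0
                · exact mul_le_mul_of_nonneg_left (hφL x y) (abs_nonneg _)
            _ = d ^ s * (Mr * g k x + Mr * g k y) + |u y| * (L * d) := by ring
            _ ≤ d ^ s * (Mr * g k x + Mr * g k y) + L * d * (|u x| + |u y|) := by
                have h0 : 0 ≤ L * d := by positivity
                nlinarith [mul_nonneg h0 (abs_nonneg (u x))]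
        · have hφy : φ y = 0 := Function.notMem_support.mp (fun h => hyS (hφS h))
          rw [Set.indicator_of_mem hxS, Set.indicator_of_notMem hyS,
            Set.indicator_of_mem hxS, Set.indicator_of_notMem hyS]
          have h1 : 0 ≤ d ^ s * (Mr * g k x + Mr * 0) := by
            have := hgpos k x; positivity
          have h2 : |u x * φ x - 0 * φ y| ≤ |u x| * (L * d) := by
            rw [zero_mul, sub_zero, abs_mul]
            calc |u x| * |φ x| = |u x| * |φ x - φ y| := by rw [hφy, sub_zero]
              _ ≤ |u x| * (L * d) := mul_le_mul_of_nonneg_left (hφL x y) (abs_nonneg _)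
          have h3 : |u x| * (L * d) ≤ L * d * (|u x| + |(0:ℝ)|) := by
            rw [abs_zero, add_zero]; ring_nf; exact le_rfl
          linarith
        · have hφx : φ x = 0 := Function.notMem_support.mp (fun h => hxS (hφS h))
          rw [Set.indicator_of_notMem hxS, Set.indicator_of_mem hyS,
            Set.indicator_of_notMem hxS, Set.indicator_of_mem hyS]
          have h1 : 0 ≤ d ^ s * (Mr * 0 + Mr * g k y) := by
            have := hgpos k y; positivity
          have h2 : |0 * φ x - u y * φ y| ≤ |u y| * (L * d) := by
            rw [zero_mul, zero_sub, abs_neg, abs_mul]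
            calc |u y| * |φ y| = |u y| * |φ y - φ x| := by rw [hφx, sub_zero]
              _ ≤ |u y| * (L * dist y x) := mul_le_mul_of_nonneg_left (hφL y x) (abs_nonneg _)
              _ = |u y| * (L * d) := by rw [dist_comm]
          have h3 : |u y| * (L * d) ≤ L * d * (|(0:ℝ)| + |u y|) := by
            rw [abs_zero, zero_add]; ring_nf; exact le_rfl
          linarith
        · rw [Set.indicator_of_notMem hxS, Set.indicator_of_notMem hyS,
            Set.indicator_of_notMem hxS, Set.indicator_of_notMem hyS]
          simp only [zero_mul, sub_zero, abs_zero]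
          positivity
      have hT : 0 ≤ |S.indicator u x| + |S.indicator u y| := by positivity
      calc |S.indicator u x * φ x - S.indicator u y * φ y|
          ≤ d ^ s * (Mr * S.indicator (g k) x + Mr * S.indicator (g k) y)
            + L * d * (|S.indicator u x| + |S.indicator u y|) := hmaster
        _ ≤ d ^ s * (Mr * S.indicator (g k) x + Mr * S.indicator (g k) y)
            + (d ^ s * (2*(Mr+L+1) * (2:ℝ) ^ (-(m * (k:ℝ)))))
              * (|S.indicator u x| + |S.indicator u y|) :=
            add_le_add_right (mul_le_mul_of_nonneg_right hLd hT) _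
        _ = d ^ s * ((Mr * S.indicator (g k) x
                + 2*(Mr+L+1) * (2:ℝ) ^ (-(m * (k:ℝ))) * |S.indicator u x|)
              + (Mr * S.indicator (g k) y
                + 2*(Mr+L+1) * (2:ℝ) ^ (-(m * (k:ℝ))) * |S.indicator u y|)) := by ring



lemma LpE_ofReal_indicator {μ : Measure X} {p : ℝ} (hp : 0 < p) {S : Set X}
    (hS : MeasurableSet S) (f : X → ℝ) :
    LpE μ p (fun x => ENNReal.ofReal (S.indicator f x))
      = LpE (μ.restrict S) p (fun x => ENNReal.ofReal (f x)) := by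
  rw [← LpE_indicator hp hS (fun x => ENNReal.ofReal (f x))]
  congr 1; funext x; by_cases hx : x ∈ S <;> simp [hx]

lemma LpE_abs_indicator {μ : Measure X} {p : ℝ} (hp : 0 < p) {S : Set X}
    (hS : MeasurableSet S) (u : X → ℝ) :
    LpE μ p (fun x => ENNReal.ofReal |S.indicator u x|) = LpS μ p S u := by
  have h1 : (fun x => ENNReal.ofReal |S.indicator u x|)
      = fun x => ENNReal.ofReal (S.indicator (fun x' => |u x'|) x) := by
    funext x; by_cases hx : x ∈ S <;> simp [hx]
  rw [h1, LpE_ofReal_indicator hp hS]; rfl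

lemma LpE_nonneg_indicator {μ : Measure X} {p : ℝ} (hp : 0 < p) {S : Set X}
    (hS : MeasurableSet S) {f : X → ℝ} (hf : ∀ x, 0 ≤ f x) :
    LpE μ p (fun x => ENNReal.ofReal (S.indicator f x)) = LpS μ p S f := by
  rw [LpE_ofReal_indicator hp hS]
  unfold LpS
  congr 1; funext x; rw [abs_of_nonneg (hf x)]

lemma tl_bound {μ : Measure X} {p : ℝ} {q : ℝ≥0∞} (hp : 0 < p) (hq : 0 < q)
    {S : Set X} (hS : MeasurableSet S) {Mr : ℝ} (hM0 : 0 ≤ Mr) {ck : ℤ → ℝ}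
    (hck : ∀ k, 0 ≤ ck k) (hK : lqNorm q (fun k => ENNReal.ofReal (ck k)) ≠ ⊤)
    {u : X → ℝ} (hu : Measurable u) {g : ℤ → X → ℝ} (hgpos : ∀ k x, 0 ≤ g k x)
    (hgmeas : ∀ k, Measurable (g k)) :
    tlGradNorm μ p q univ (fun k x => Mr * S.indicator (g k) x + ck k * |S.indicator u x|)
      ≤ (2 * 2 ^ (1 / q.toReal)) * ((2 * (2:ℝ≥0∞) ^ (1/p)) *
        (ENNReal.ofReal Mr * tlGradNorm μ p q S g
          + lqNorm q (fun k => ENNReal.ofReal (ck k)) * LpS μ p S u)) := by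
  set K := lqNorm q (fun k => ENNReal.ofReal (ck k)) with hKdef
  set G : X → ℝ≥0∞ := fun x => lqNorm q (fun k => ENNReal.ofReal (S.indicator (g k) x)) with hGdef
  set V : X → ℝ≥0∞ := fun x => ENNReal.ofReal |S.indicator u x| with hVdef
  have hGmeas : Measurable G :=
    lq_measurable fun k => ((hgmeas k).indicator hS).ennreal_ofReal
  have hpoint : ∀ x, lqNorm q (fun k => ENNReal.ofReal
      (Mr * S.indicator (g k) x + ck k * |S.indicator u x|))
      ≤ (2 * 2 ^ (1 / q.toReal)) * (ENNReal.ofReal Mr * G x + K * V x) := by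
    intro x
    have e : ∀ k, ENNReal.ofReal (Mr * S.indicator (g k) x + ck k * |S.indicator u x|)
        = ENNReal.ofReal Mr * ENNReal.ofReal (S.indicator (g k) x)
          + ENNReal.ofReal (ck k) * V x := by
      intro k
      rw [ENNReal.ofReal_add
          (mul_nonneg hM0 (Set.indicator_nonneg (fun z _ => hgpos k z) x))
          (mul_nonneg (hck k) (abs_nonneg _)),
        ENNReal.ofReal_mul hM0, ENNReal.ofReal_mul (hck k)]
    calc lqNorm q (fun k => ENNReal.ofReal
          (Mr * S.indicator (g k) x + ck k * |S.indicator u x|))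
        = lqNorm q (fun k => ENNReal.ofReal Mr * ENNReal.ofReal (S.indicator (g k) x)
            + ENNReal.ofReal (ck k) * V x) := by
          congr 1; funext k; exact e k
      _ ≤ (2 * 2 ^ (1 / q.toReal)) *
            (lqNorm q (fun k => ENNReal.ofReal Mr * ENNReal.ofReal (S.indicator (g k) x))
              + lqNorm q (fun k => ENNReal.ofReal (ck k) * V x)) := lq_add_le hq _ _
      _ = (2 * 2 ^ (1 / q.toReal)) * (ENNReal.ofReal Mr * G x + K * V x) := by
          rw [lq_const_mul hq]
          congr 2
          have : (fun k => ENNReal.ofReal (ck k) * V x)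
              = fun k => (fun k' => ENNReal.ofReal (ck k')) k * V x := rfl
          rw [this, lq_mul_const hq]
  have hGid : LpE μ p G = tlGradNorm μ p q S g := by
    have h1 : G = fun x =>
        S.indicator (fun x' => lqNorm q (fun k => ENNReal.ofReal (g k x'))) x := by
      funext x
      by_cases hx : x ∈ S
      · simp only [hGdef, Set.indicator_of_mem hx]
      · simp only [hGdef, Set.indicator_of_notMem hx, ENNReal.ofReal_zero]
        exact lq_zero hq
    rw [h1, LpE_indicator hp hS]; rfl
  have hVid : LpE μ p V = LpS μ p S u := LpE_abs_indicator hp hS u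
  unfold tlGradNorm
  rw [Measure.restrict_univ]
  calc LpE μ p (fun x => lqNorm q fun k => ENNReal.ofReal
        (Mr * S.indicator (g k) x + ck k * |S.indicator u x|))
      ≤ LpE μ p (fun x => (2 * 2 ^ (1 / q.toReal)) * (ENNReal.ofReal Mr * G x + K * V x)) :=
        LpE_mono hp hpoint
    _ = (2 * 2 ^ (1 / q.toReal)) * LpE μ p (fun x => ENNReal.ofReal Mr * G x + K * V x) :=
        LpE_const_mul hp (ENNReal.mul_ne_top (by norm_num)
          (ENNReal.rpow_ne_top_of_nonneg (by positivity) (by norm_num))) _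
    _ ≤ (2 * 2 ^ (1 / q.toReal)) * ((2 * (2:ℝ≥0∞) ^ (1/p)) *
          (LpE μ p (fun x => ENNReal.ofReal Mr * G x) + LpE μ p (fun x => K * V x))) := by
        gcongr
        exact LpE_add_le hp (measurable_const.mul hGmeas) _
    _ = (2 * 2 ^ (1 / q.toReal)) * ((2 * (2:ℝ≥0∞) ^ (1/p)) *
          (ENNReal.ofReal Mr * tlGradNorm μ p q S g + K * LpS μ p S u)) := by
        rw [LpE_const_mul hp ENNReal.ofReal_ne_top, LpE_const_mul hp hK, hGid, hVid]

lemma besov_bound {μ : Measure X} {p : ℝ} {q : ℝ≥0∞} (hp : 0 < p) (hq : 0 < q)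
    {S : Set X} (hS : MeasurableSet S) {Mr : ℝ} (hM0 : 0 ≤ Mr) {ck : ℤ → ℝ}
    (hck : ∀ k, 0 ≤ ck k) (hK : lqNorm q (fun k => ENNReal.ofReal (ck k)) ≠ ⊤)
    {u : X → ℝ} (hu : Measurable u) {g : ℤ → X → ℝ} (hgpos : ∀ k x, 0 ≤ g k x)
    (hgmeas : ∀ k, Measurable (g k)) :
    besovGradNorm μ p q univ (fun k x => Mr * S.indicator (g k) x + ck k * |S.indicator u x|)
      ≤ (2 * 2 ^ (1 / q.toReal)) * ((2 * (2:ℝ≥0∞) ^ (1/p)) *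
        (ENNReal.ofReal Mr * besovGradNorm μ p q S g
          + lqNorm q (fun k => ENNReal.ofReal (ck k)) * LpS μ p S u)) := by
  set K := lqNorm q (fun k => ENNReal.ofReal (ck k)) with hKdef
  set Cp := (2 * (2:ℝ≥0∞) ^ (1/p)) with hCpdef
  have hCp : Cp ≠ ⊤ := ENNReal.mul_ne_top (by norm_num)
    (ENNReal.rpow_ne_top_of_nonneg (by positivity) (by norm_num))
  have hperk : ∀ k, LpS μ p univ
      (fun x => Mr * S.indicator (g k) x + ck k * |S.indicator u x|)
      ≤ Cp * (ENNReal.ofReal Mr * LpS μ p S (g k))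
        + Cp * (ENNReal.ofReal (ck k) * LpS μ p S u) := by
    intro k
    have habs : ∀ x, ENNReal.ofReal (abs (Mr * S.indicator (g k) x + ck k * |S.indicator u x|))
        = ENNReal.ofReal Mr * ENNReal.ofReal (S.indicator (g k) x)
          + ENNReal.ofReal (ck k) * ENNReal.ofReal |S.indicator u x| := by
      intro x
      have h1 : 0 ≤ Mr * S.indicator (g k) x :=
        mul_nonneg hM0 (Set.indicator_nonneg (fun z _ => hgpos k z) x)
      have h2 : 0 ≤ ck k * |S.indicator u x| := mul_nonneg (hck k) (abs_nonneg _)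
      rw [abs_of_nonneg (by linarith), ENNReal.ofReal_add h1 h2,
        ENNReal.ofReal_mul hM0, ENNReal.ofReal_mul (hck k)]
    have hstep : LpS μ p univ (fun x => Mr * S.indicator (g k) x + ck k * |S.indicator u x|)
        = LpE μ p (fun x => ENNReal.ofReal Mr * ENNReal.ofReal (S.indicator (g k) x)
            + ENNReal.ofReal (ck k) * ENNReal.ofReal |S.indicator u x|) := by
      unfold LpS
      rw [Measure.restrict_univ]
      congr 1; funext x; exact habs x
    rw [hstep]
    calc LpE μ p (fun x => ENNReal.ofReal Mr * ENNReal.ofReal (S.indicator (g k) x)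
            + ENNReal.ofReal (ck k) * ENNReal.ofReal |S.indicator u x|)
        ≤ Cp * (LpE μ p (fun x => ENNReal.ofReal Mr * ENNReal.ofReal (S.indicator (g k) x))
            + LpE μ p (fun x => ENNReal.ofReal (ck k) * ENNReal.ofReal |S.indicator u x|)) :=
          LpE_add_le hp (measurable_const.mul ((hgmeas k).indicator hS).ennreal_ofReal) _
      _ = Cp * (ENNReal.ofReal Mr * LpS μ p S (g k))
            + Cp * (ENNReal.ofReal (ck k) * LpS μ p S u) := by
          rw [LpE_const_mul hp ENNReal.ofReal_ne_top, LpE_const_mul hp ENNReal.ofReal_ne_top,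
            LpE_nonneg_indicator hp hS (hgpos k), LpE_abs_indicator hp hS, mul_add]
  unfold besovGradNorm
  calc lqNorm q (fun k => LpS μ p univ
        (fun x => Mr * S.indicator (g k) x + ck k * |S.indicator u x|))
      ≤ lqNorm q (fun k => Cp * (ENNReal.ofReal Mr * LpS μ p S (g k))
          + Cp * (ENNReal.ofReal (ck k) * LpS μ p S u)) := lq_mono hperk
    _ ≤ (2 * 2 ^ (1 / q.toReal)) *
          (lqNorm q (fun k => Cp * (ENNReal.ofReal Mr * LpS μ p S (g k)))
            + lqNorm q (fun k => Cp * (ENNReal.ofReal (ck k) * LpS μ p S u))) :=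
        lq_add_le hq _ _
    _ = (2 * 2 ^ (1 / q.toReal)) * (Cp *
          (ENNReal.ofReal Mr * besovGradNorm μ p q S g + K * LpS μ p S u)) := by
        have e1 : lqNorm q (fun k => Cp * (ENNReal.ofReal Mr * LpS μ p S (g k)))
            = Cp * ENNReal.ofReal Mr * lqNorm q (fun k => LpS μ p S (g k)) := by
          have : (fun k => Cp * (ENNReal.ofReal Mr * LpS μ p S (g k)))
              = fun k => (Cp * ENNReal.ofReal Mr) * LpS μ p S (g k) := by
            funext k; ring
          rw [this, lq_const_mul hq]
        have e2 : lqNorm q (fun k => Cp * (ENNReal.ofReal (ck k) * LpS μ p S u))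
            = K * (Cp * LpS μ p S u) := by
          have : (fun k => Cp * (ENNReal.ofReal (ck k) * LpS μ p S u))
              = fun k => (fun k' => ENNReal.ofReal (ck k')) k * (Cp * LpS μ p S u) := by
            funext k; ring
          rw [this, lq_mul_const hq]
        rw [e1, e2]
        unfold besovGradNorm
        ring



lemma exists_of_iInf_ne_top {ι : Sort*} {P : ι → Prop} {t : ι → ℝ≥0∞}
    (h : (⨅ i, ⨅ (_ : P i), t i) ≠ ⊤) : ∃ i, P i := by
  by_contra hc
  push_neg at hc
  apply h
  have h1 : ∀ i, (⨅ (_ : P i), t i) = ⊤ := fun i => iInf_neg (hc i)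
  simp [h1]

lemma iInf_aux {ι : Sort*} {P : ι → Prop} {t : ι → ℝ≥0∞} {a C r : ℝ≥0∞}
    (hC : C ≠ ⊤) (hr : r ≠ ⊤) (hne : ∃ i, P i)
    (h : ∀ i, P i → a ≤ C * t i + r) : a ≤ C * (⨅ i, ⨅ (_ : P i), t i) + r := by
  rcases eq_or_ne C 0 with hC0 | hC0
  · obtain ⟨i, hi⟩ := hne
    calc a ≤ C * t i + r := h i hi
      _ = r := by rw [hC0, zero_mul, zero_add]
      _ ≤ _ := le_add_self
  · refine ENNReal.le_of_forall_pos_le_add fun ε hε hb => ?_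
    set I := ⨅ i, ⨅ (_ : P i), t i with hIdef
    have hI : I ≠ ⊤ := by
      intro hItop
      rw [hItop, ENNReal.mul_top hC0] at hb
      simp at hb
    have hC1top : C + 1 ≠ ⊤ := ENNReal.add_ne_top.mpr ⟨hC, ENNReal.one_ne_top⟩
    have hδ : (0:ℝ≥0∞) < (ε:ℝ≥0∞) / (C + 1) :=
      ENNReal.div_pos (by exact_mod_cast hε.ne') hC1top
    have hlt : I < I + (ε:ℝ≥0∞)/(C+1) := ENNReal.lt_add_right hI hδ.ne'
    obtain ⟨i, hi⟩ := iInf_lt_iff.mp hlt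
    obtain ⟨hPi, hti⟩ := iInf_lt_iff.mp hi
    calc a ≤ C * t i + r := h i hPi
      _ ≤ C * (I + (ε:ℝ≥0∞)/(C+1)) + r := add_le_add_left (mul_le_mul_right hti.le C) r
      _ = (C * I + r) + C * ((ε:ℝ≥0∞)/(C+1)) := by ring
      _ ≤ (C * I + r) + ε := by
          gcongr
          calc C * ((ε:ℝ≥0∞)/(C+1)) ≤ (C+1) * ((ε:ℝ≥0∞)/(C+1)) := by
                gcongr; exact le_self_add
            _ = ε := ENNReal.mul_div_cancel (by simp) hC1top

end HTL
end HTLhelp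

/-- Multiplication by a bounded Lipschitz function `φ` supported in `S` maps
`M^s_{p,q}(S)` (resp. `N^s_{p,q}(S)`) boundedly into `M^s_{p,q}(X)` (resp. `N^s_{p,q}(X)`),
where `u` is extended by zero outside `S`. -/
theorem mul_lipschitz_bounded
    {X : Type*} [MetricSpace X] [MeasurableSpace X] [BorelSpace X] (μ : Measure X)
    (s p : ℝ) (q : ℝ≥0∞) (hs0 : 0 < s) (hs1 : s < 1) (hp : 0 < p) (hq : 0 < q)
    (S : Set X) (hS : MeasurableSet S)
    (φ : X → ℝ) (L : ℝ) (hL : 0 ≤ L) (hφL : ∀ x y, |φ x - φ y| ≤ L * dist x y)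
    (hφb : BddAbove (Set.range fun x => |φ x|)) (hφS : Function.support φ ⊆ S) :
    ∃ C : ℝ, 0 < C ∧ ∀ u : X → ℝ, Measurable u →
      (TLNorm μ s p q S u ≠ ⊤ →
        TLNorm μ s p q univ (fun x => S.indicator u x * φ x) ≠ ⊤ ∧
        TLNorm μ s p q univ (fun x => S.indicator u x * φ x)
          ≤ ENNReal.ofReal C * TLNorm μ s p q S u) ∧
      (BesovNorm μ s p q S u ≠ ⊤ →
        BesovNorm μ s p q univ (fun x => S.indicator u x * φ x) ≠ ⊤ ∧
        BesovNorm μ s p q univ (fun x => S.indicator u x * φ x)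
          ≤ ENNReal.ofReal C * BesovNorm μ s p q S u) := by
  classical
  set Mr := sSup (Set.range fun x => |φ x|) with hMrdef
  have hM : ∀ x, |φ x| ≤ Mr := fun x => le_csSup hφb ⟨x, rfl⟩
  have hM0 : 0 ≤ Mr := Real.sSup_nonneg (by rintro v ⟨x, rfl⟩; positivity)
  have hm0 : 0 < min s (1 - s) := lt_min hs0 (by linarith)
  set ck : ℤ → ℝ := fun k => (2*(Mr+L+1)) * (2:ℝ) ^ (-(min s (1-s) * (k.natAbs : ℝ)))
    with hckdef
  have hck : ∀ k, 0 ≤ ck k := fun k => by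
    have : (0:ℝ) < (2:ℝ) ^ (-(min s (1-s) * (k.natAbs : ℝ))) := Real.rpow_pos_of_pos two_pos _
    rw [hckdef]
    positivity
  set K := lqNorm q (fun k => ENNReal.ofReal (ck k)) with hKdef
  have hK : K ≠ ⊤ := HTL.lq_geom_ne_top hq (by linarith) hm0
  set Cq := (2:ℝ≥0∞) * 2 ^ (1 / q.toReal) with hCqdef
  set Cp := (2:ℝ≥0∞) * 2 ^ (1 / p) with hCpdef
  have hCq : Cq ≠ ⊤ := ENNReal.mul_ne_top (by norm_num)
    (ENNReal.rpow_ne_top_of_nonneg (by positivity) (by norm_num))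
  have hCp : Cp ≠ ⊤ := ENNReal.mul_ne_top (by norm_num)
    (ENNReal.rpow_ne_top_of_nonneg (by positivity) (by norm_num))
  set Mh := ENNReal.ofReal Mr with hMhdef
  have hMhtop : Mh ≠ ⊤ := ENNReal.ofReal_ne_top
  have hCfin : Cq * Cp * Mh ≠ ⊤ := ENNReal.mul_ne_top (ENNReal.mul_ne_top hCq hCp) hMhtop
  have hCKfin : Cq * Cp * K ≠ ⊤ := ENNReal.mul_ne_top (ENNReal.mul_ne_top hCq hCp) hK
  set D := Mh + Cq * Cp * Mh + Cq * Cp * K with hDdef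
  have hDtop : D ≠ ⊤ :=
    ENNReal.add_ne_top.mpr ⟨ENNReal.add_ne_top.mpr ⟨hMhtop, hCfin⟩, hCKfin⟩
  have hD1 : Mh + Cq * Cp * K ≤ D := by
    rw [hDdef]; exact add_le_add le_self_add le_rfl
  have hD2 : Cq * Cp * Mh ≤ D := le_add_self.trans le_self_add
  have hC0 : 0 < D.toReal + 1 := by
    have := ENNReal.toReal_nonneg (a := D); linarith
  refine ⟨D.toReal + 1, hC0, fun u hu => ?_⟩
  have hDC : D ≤ ENNReal.ofReal (D.toReal + 1) := by
    calc D = ENNReal.ofReal D.toReal := (ENNReal.ofReal_toReal hDtop).symm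
      _ ≤ _ := ENNReal.ofReal_le_ofReal (by linarith)
  have hpart1 : LpS μ p univ (fun x => S.indicator u x * φ x) ≤ Mh * LpS μ p S u := by
    have hpw : ∀ x, ENNReal.ofReal |S.indicator u x * φ x|
        ≤ Mh * ENNReal.ofReal |S.indicator u x| := by
      intro x
      rw [hMhdef, ← ENNReal.ofReal_mul hM0]
      apply ENNReal.ofReal_le_ofReal
      rw [abs_mul, mul_comm]
      exact mul_le_mul_of_nonneg_right (hM x) (abs_nonneg _)
    calc LpS μ p univ (fun x => S.indicator u x * φ x)
        = LpE μ p (fun x => ENNReal.ofReal |S.indicator u x * φ x|) := by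
          unfold LpS; rw [Measure.restrict_univ]
      _ ≤ LpE μ p (fun x => Mh * ENNReal.ofReal |S.indicator u x|) := HTL.LpE_mono hp hpw
      _ = Mh * LpE μ p (fun x => ENNReal.ofReal |S.indicator u x|) :=
          HTL.LpE_const_mul hp hMhtop _
      _ = Mh * LpS μ p S u := by rw [HTL.LpE_abs_indicator hp hS]
  constructor
  · -- Triebel–Lizorkin
    intro hfin
    have hfin' : LpS μ p S u
        + (⨅ (g : ℤ → X → ℝ) (_ : IsFracGrad μ s S u g), tlGradNorm μ p q S g) ≠ ⊤ := hfin
    obtain ⟨hLu, hIg⟩ := ENNReal.add_ne_top.mp hfin'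
    have hex : ∃ g, IsFracGrad μ s S u g := HTL.exists_of_iInf_ne_top hIg
    have hr : Cq * Cp * K * LpS μ p S u ≠ ⊤ := ENNReal.mul_ne_top hCKfin hLu
    have hpart2 : (⨅ (h : ℤ → X → ℝ)
          (_ : IsFracGrad μ s univ (fun x => S.indicator u x * φ x) h),
          tlGradNorm μ p q univ h)
        ≤ Cq * Cp * Mh * (⨅ (g : ℤ → X → ℝ) (_ : IsFracGrad μ s S u g), tlGradNorm μ p q S g)
          + Cq * Cp * K * LpS μ p S u := by
      apply HTL.iInf_aux hCfin hr hex
      intro g hg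
      calc (⨅ (h : ℤ → X → ℝ)
            (_ : IsFracGrad μ s univ (fun x => S.indicator u x * φ x) h),
            tlGradNorm μ p q univ h)
          ≤ tlGradNorm μ p q univ
              (fun k x => Mr * S.indicator (g k) x + ck k * |S.indicator u x|) :=
            iInf₂_le _ (HTL.isFracGrad_mul μ hs0 hs1 hS hL hφL hM hM0 hφS hu hg)
        _ ≤ Cq * (Cp * (Mh * tlGradNorm μ p q S g + K * LpS μ p S u)) :=
            HTL.tl_bound hp hq hS hM0 hck hK hu hg.1 hg.2.1
        _ = Cq * Cp * Mh * tlGradNorm μ p q S g + Cq * Cp * K * LpS μ p S u := by ring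
    have hbound : TLNorm μ s p q univ (fun x => S.indicator u x * φ x)
        ≤ D * TLNorm μ s p q S u := by
      calc TLNorm μ s p q univ (fun x => S.indicator u x * φ x)
          = LpS μ p univ (fun x => S.indicator u x * φ x)
            + (⨅ (h : ℤ → X → ℝ)
              (_ : IsFracGrad μ s univ (fun x => S.indicator u x * φ x) h),
              tlGradNorm μ p q univ h) := rfl
        _ ≤ Mh * LpS μ p S u
            + (Cq * Cp * Mh * (⨅ (g : ℤ → X → ℝ) (_ : IsFracGrad μ s S u g),
                tlGradNorm μ p q S g) + Cq * Cp * K * LpS μ p S u) :=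
            add_le_add hpart1 hpart2
        _ = (Mh + Cq * Cp * K) * LpS μ p S u
            + Cq * Cp * Mh * (⨅ (g : ℤ → X → ℝ) (_ : IsFracGrad μ s S u g),
                tlGradNorm μ p q S g) := by ring
        _ ≤ D * LpS μ p S u + D * (⨅ (g : ℤ → X → ℝ) (_ : IsFracGrad μ s S u g),
                tlGradNorm μ p q S g) :=
            add_le_add (mul_le_mul_left hD1 _) (mul_le_mul_left hD2 _)
        _ = D * (LpS μ p S u + ⨅ (g : ℤ → X → ℝ) (_ : IsFracGrad μ s S u g),
                tlGradNorm μ p q S g) := (mul_add D _ _).symm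
        _ = D * TLNorm μ s p q S u := rfl
    have hfinal : TLNorm μ s p q univ (fun x => S.indicator u x * φ x)
        ≤ ENNReal.ofReal (D.toReal + 1) * TLNorm μ s p q S u :=
      hbound.trans (mul_le_mul_left hDC _)
    exact ⟨ne_top_of_le_ne_top (ENNReal.mul_ne_top ENNReal.ofReal_ne_top hfin) hfinal, hfinal⟩
  · -- Besov
    intro hfin
    have hfin' : LpS μ p S u
        + (⨅ (g : ℤ → X → ℝ) (_ : IsFracGrad μ s S u g), besovGradNorm μ p q S g) ≠ ⊤ := hfin
    obtain ⟨hLu, hIg⟩ := ENNReal.add_ne_top.mp hfin'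
    have hex : ∃ g, IsFracGrad μ s S u g := HTL.exists_of_iInf_ne_top hIg
    have hr : Cq * Cp * K * LpS μ p S u ≠ ⊤ := ENNReal.mul_ne_top hCKfin hLu
    have hpart2 : (⨅ (h : ℤ → X → ℝ)
          (_ : IsFracGrad μ s univ (fun x => S.indicator u x * φ x) h),
          besovGradNorm μ p q univ h)
        ≤ Cq * Cp * Mh * (⨅ (g : ℤ → X → ℝ) (_ : IsFracGrad μ s S u g), besovGradNorm μ p q S g)
          + Cq * Cp * K * LpS μ p S u := by
      apply HTL.iInf_aux hCfin hr hex
      intro g hg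
      calc (⨅ (h : ℤ → X → ℝ)
            (_ : IsFracGrad μ s univ (fun x => S.indicator u x * φ x) h),
            besovGradNorm μ p q univ h)
          ≤ besovGradNorm μ p q univ
              (fun k x => Mr * S.indicator (g k) x + ck k * |S.indicator u x|) :=
            iInf₂_le _ (HTL.isFracGrad_mul μ hs0 hs1 hS hL hφL hM hM0 hφS hu hg)
        _ ≤ Cq * (Cp * (Mh * besovGradNorm μ p q S g + K * LpS μ p S u)) :=
            HTL.besov_bound hp hq hS hM0 hck hK hu hg.1 hg.2.1
        _ = Cq * Cp * Mh * besovGradNorm μ p q S g + Cq * Cp * K * LpS μ p S u := by ring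
    have hbound : BesovNorm μ s p q univ (fun x => S.indicator u x * φ x)
        ≤ D * BesovNorm μ s p q S u := by
      calc BesovNorm μ s p q univ (fun x => S.indicator u x * φ x)
          = LpS μ p univ (fun x => S.indicator u x * φ x)
            + (⨅ (h : ℤ → X → ℝ)
              (_ : IsFracGrad μ s univ (fun x => S.indicator u x * φ x) h),
              besovGradNorm μ p q univ h) := rfl
        _ ≤ Mh * LpS μ p S u
            + (Cq * Cp * Mh * (⨅ (g : ℤ → X → ℝ) (_ : IsFracGrad μ s S u g),
                besovGradNorm μ p q S g) + Cq * Cp * K * LpS μ p S u) :=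
            add_le_add hpart1 hpart2
        _ = (Mh + Cq * Cp * K) * LpS μ p S u
            + Cq * Cp * Mh * (⨅ (g : ℤ → X → ℝ) (_ : IsFracGrad μ s S u g),
                besovGradNorm μ p q S g) := by ring
        _ ≤ D * LpS μ p S u + D * (⨅ (g : ℤ → X → ℝ) (_ : IsFracGrad μ s S u g),
                besovGradNorm μ p q S g) :=
            add_le_add (mul_le_mul_left hD1 _) (mul_le_mul_left hD2 _)
        _ = D * (LpS μ p S u + ⨅ (g : ℤ → X → ℝ) (_ : IsFracGrad μ s S u g),
                besovGradNorm μ p q S g) := (mul_add D _ _).symm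
        _ = D * BesovNorm μ s p q S u := rfl
    have hfinal : BesovNorm μ s p q univ (fun x => S.indicator u x * φ x)
        ≤ ENNReal.ofReal (D.toReal + 1) * BesovNorm μ s p q S u :=
      hbound.trans (mul_le_mul_left hDC _)
    exact ⟨ne_top_of_le_ne_top (ENNReal.mul_ne_top ENNReal.ofReal_ne_top hfin) hfinal, hfinal⟩

end
end

section
/- Let (X,d,μ) be a metric measure space, let 0 < s < 1, 0 < p < ∞ and 0 < q ≤ ∞. Let Ω ⊂ X be a measurable set and let φ : Ω → ℝ be an L-Lipschitz function supported in a bounded measurable set F ⊂ Ω. Then φ ∈ M^s_{p,q}(Ω) and ‖φ‖_{M^s_{p,q}(Ω)} ≤ C (1 + ‖φ‖_∞)(1 + L^s) μ(F)^{1/p}, where the constant C > 0 depends only on s and q. The same estimate holds with M^s_{p,q}(Ω) replaced by N^s_{p,q}(Ω). -/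
open MeasureTheory Metric Set
open scoped ENNReal NNReal
noncomputable section

variable {X : Type*} [MetricSpace X] [MeasurableSpace X]

-- batch 1: lqNorm lemmas
lemma lqNorm_mono {q : ℝ≥0∞} {f g : ℤ → ℝ≥0∞} (h : ∀ k, f k ≤ g k) :
    lqNorm q f ≤ lqNorm q g := by
  unfold lqNorm
  split
  · exact iSup_mono h
  · exact ENNReal.rpow_le_rpow
      (ENNReal.tsum_le_tsum fun k => ENNReal.rpow_le_rpow (h k) ENNReal.toReal_nonneg)
      (by positivity)

lemma lqNorm_smul {q : ℝ≥0∞} (hq : 0 < q) (a : ℝ≥0∞) (f : ℤ → ℝ≥0∞) :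
    lqNorm q (fun k => a * f k) = a * lqNorm q f := by
  unfold lqNorm
  split
  · exact (ENNReal.mul_iSup a f).symm
  · rename_i hqt
    have hτ : 0 < q.toReal := ENNReal.toReal_pos hq.ne' hqt
    have h1 : ∀ k, (a * f k) ^ q.toReal = a ^ q.toReal * f k ^ q.toReal := fun k =>
      ENNReal.mul_rpow_of_nonneg _ _ ENNReal.toReal_nonneg
    simp only [h1, ENNReal.tsum_mul_left]
    rw [ENNReal.mul_rpow_of_nonneg _ _ (by positivity : (0:ℝ) ≤ 1 / q.toReal),
      ← ENNReal.rpow_mul, mul_one_div_cancel hτ.ne', ENNReal.rpow_one]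

lemma lqNorm_zero {q : ℝ≥0∞} (hq : 0 < q) : lqNorm q (fun _ => (0:ℝ≥0∞)) = 0 := by
  have := lqNorm_smul hq 0 (fun _ => (0:ℝ≥0∞))
  simpa using this

lemma LpE_mono_ae {Y : Type*} [MeasurableSpace Y] {ν : Measure Y} {p : ℝ} (hp : 0 < p)
    {f g : Y → ℝ≥0∞} (h : ∀ᵐ x ∂ν, f x ≤ g x) : LpE ν p f ≤ LpE ν p g :=
  ENNReal.rpow_le_rpow
    (lintegral_mono_ae (h.mono fun _ hx => ENNReal.rpow_le_rpow hx hp.le)) (by positivity)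

lemma LpE_indicator_const {Y : Type*} [MeasurableSpace Y] (μ : Measure Y) {p : ℝ} (hp : 0 < p)
    {F S : Set Y} (hF : MeasurableSet F) (hsub : F ⊆ S) (c : ℝ≥0∞) :
    LpE (μ.restrict S) p (F.indicator fun _ => c) = c * μ F ^ (1/p) := by
  unfold LpE
  have h1 : ∀ x, (F.indicator (fun _ => c) x) ^ p = F.indicator (fun _ => c ^ p) x := by
    intro x
    by_cases hx : x ∈ F
    · simp [hx]
    · simp [hx, ENNReal.zero_rpow_of_pos hp]
  simp only [h1]
  rw [lintegral_indicator hF, setLIntegral_const,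
    Measure.restrict_apply hF, Set.inter_eq_self_of_subset_left hsub,
    ENNReal.mul_rpow_of_nonneg _ _ (by positivity : (0:ℝ) ≤ 1/p),
    ← ENNReal.rpow_mul, mul_one_div_cancel hp.ne', ENNReal.rpow_one]

lemma tsum_int_pow_natAbs_le {R : ℝ≥0∞} (hR : R ≤ 1) :
    ∑' k : ℤ, R ^ k.natAbs ≤ 2 * (1 - R)⁻¹ := by
  have hfun : (fun k : ℤ => R ^ k.natAbs)
      = Int.rec (fun n : ℕ => R ^ n) (fun n : ℕ => R ^ (n + 1)) := by
    funext k
    cases k <;> rfl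
  rw [hfun, tsum_int_rec ENNReal.summable ENNReal.summable,
    ENNReal.tsum_geometric, ENNReal.tsum_geometric_add_one, two_mul]
  gcongr
  exact mul_le_of_le_one_left zero_le hR

lemma aux_C1 (s : ℝ) (q : ℝ≥0∞) (hs0 : 0 < s) (hs1 : s < 1) (hq : 0 < q) :
    ∃ C1 : ℝ≥0∞, C1 ≠ ⊤ ∧ ∀ t : ℝ,
      lqNorm q (fun k => ENNReal.ofReal
        (min ((2:ℝ) ^ (-((k:ℝ) - t) * (1 - s))) ((2:ℝ) ^ (((k:ℝ) - t) * s)))) ≤ C1 := by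
  have h2 : (1:ℝ) ≤ 2 := one_le_two
  by_cases hqt : q = ⊤
  · refine ⟨1, ENNReal.one_ne_top, fun t => ?_⟩
    rw [lqNorm, if_pos hqt]
    refine iSup_le fun k => ?_
    rw [← ENNReal.ofReal_one]
    refine ENNReal.ofReal_le_ofReal ?_
    rcases le_total t (k:ℝ) with hkt | hkt
    · refine (min_le_left _ _).trans ?_
      exact Real.rpow_le_one_of_one_le_of_nonpos h2
        (by nlinarith)
    · refine (min_le_right _ _).trans ?_
      exact Real.rpow_le_one_of_one_le_of_nonpos h2 (by nlinarith)
  · set τ := q.toReal with hτdef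
    have hτ : 0 < τ := ENNReal.toReal_pos hq.ne' hqt
    set ε := min s (1 - s) with hεdef
    have hε : 0 < ε := lt_min hs0 (by linarith)
    have hε1 : ε ≤ 1 := (min_le_left _ _).trans hs1.le
    set r0 := (2:ℝ) ^ (-ε) with hr0def
    have hr00 : 0 < r0 := Real.rpow_pos_of_pos two_pos _
    have hr01 : r0 < 1 :=
      Real.rpow_lt_one_of_one_lt_of_neg one_lt_two (by linarith)
    set R := ENNReal.ofReal (r0 ^ τ) with hRdef
    have hrτ : 0 < r0 ^ τ := Real.rpow_pos_of_pos hr00 _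
    have hrτ1 : r0 ^ τ < 1 := Real.rpow_lt_one hr00.le hr01 hτ
    have hR1 : R < 1 := by
      rw [hRdef, ← ENNReal.ofReal_one]
      exact ENNReal.ofReal_lt_ofReal_iff_of_nonneg hrτ.le |>.mpr hrτ1
    set SE : ℝ≥0∞ := ENNReal.ofReal ((2:ℝ) ^ τ) * (2 * (1 - R)⁻¹) with hSEdef
    have hSEtop : SE ≠ ⊤ := by
      refine ENNReal.mul_ne_top ENNReal.ofReal_ne_top (ENNReal.mul_ne_top (by norm_num) ?_)
      rw [ENNReal.inv_ne_top]
      exact (tsub_pos_of_lt hR1).ne'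
    refine ⟨SE ^ (1/τ), ?_, fun t => ?_⟩
    · exact (ENNReal.rpow_lt_top_of_nonneg (by positivity) hSEtop).ne
    rw [lqNorm, if_neg hqt, ← hτdef]
    refine ENNReal.rpow_le_rpow ?_ (by positivity)
    set n0 : ℤ := ⌊t⌋ with hn0def
    have hfl1 : (n0:ℝ) ≤ t := Int.floor_le t
    have hfl2 : t < (n0:ℝ) + 1 := Int.lt_floor_add_one t
    -- pointwise real bound
    have key : ∀ k : ℤ,
        min ((2:ℝ) ^ (-((k:ℝ) - t) * (1 - s))) ((2:ℝ) ^ (((k:ℝ) - t) * s))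
          ≤ 2 * r0 ^ (k - n0).natAbs := by
      intro k
      have habs : ((k - n0).natAbs : ℝ) = |(k:ℝ) - (n0:ℝ)| := by
        rw [Nat.cast_natAbs]
        push_cast
        ring_nf
      have htri : |(k:ℝ) - (n0:ℝ)| ≤ |(k:ℝ) - t| + 1 := by
        have := abs_sub_abs_le_abs_sub ((k:ℝ) - (n0:ℝ)) ((k:ℝ) - t)
        have h3 : |((k:ℝ) - n0) - ((k:ℝ) - t)| = |t - (n0:ℝ)| := by ring_nf
        rw [h3] at this
        have h4 : |t - (n0:ℝ)| ≤ 1 := by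
          rw [abs_of_nonneg (by linarith)]; linarith
        linarith
      have step1 : min ((2:ℝ) ^ (-((k:ℝ) - t) * (1 - s))) ((2:ℝ) ^ (((k:ℝ) - t) * s))
          ≤ (2:ℝ) ^ (-|(k:ℝ) - t| * ε) := by
        rcases le_total t (k:ℝ) with hkt | hkt
        · refine (min_le_left _ _).trans ?_
          refine Real.rpow_le_rpow_of_exponent_le h2 ?_
          rw [abs_of_nonneg (by linarith)]
          nlinarith [min_le_right s (1 - s), min_le_left s (1-s)]
        · refine (min_le_right _ _).trans ?_
          refine Real.rpow_le_rpow_of_exponent_le h2 ?_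
          rw [abs_of_nonpos (by linarith)]
          nlinarith [min_le_left s (1 - s)]
      have step2 : (2:ℝ) ^ (-|(k:ℝ) - t| * ε) ≤ 2 * r0 ^ (k - n0).natAbs := by
        have hpow : (r0 : ℝ) ^ (k - n0).natAbs = (2:ℝ) ^ (-ε * ((k - n0).natAbs : ℝ)) := by
          rw [hr0def, ← Real.rpow_natCast ((2:ℝ)^(-ε)) _, ← Real.rpow_mul (by norm_num)]
        rw [hpow]
        have h2eq : 2 * (2:ℝ) ^ (-ε * ((k - n0).natAbs : ℝ))
            = (2:ℝ) ^ (1 + -ε * ((k - n0).natAbs : ℝ)) := by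
          rw [Real.rpow_add two_pos, Real.rpow_one]
        rw [h2eq]
        refine Real.rpow_le_rpow_of_exponent_le h2 ?_
        rw [habs]
        nlinarith [abs_nonneg ((k:ℝ) - t)]
      exact step1.trans step2
    -- now the ENNReal sum
    calc ∑' k : ℤ, (ENNReal.ofReal
          (min ((2:ℝ) ^ (-((k:ℝ) - t) * (1 - s))) ((2:ℝ) ^ (((k:ℝ) - t) * s)))) ^ τ
        ≤ ∑' k : ℤ, ENNReal.ofReal ((2:ℝ)^τ) * R ^ (k - n0).natAbs := by
          refine ENNReal.tsum_le_tsum fun k => ?_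
          have h0 : (0:ℝ) ≤ min ((2:ℝ) ^ (-((k:ℝ) - t) * (1 - s))) ((2:ℝ) ^ (((k:ℝ) - t) * s)) :=
            le_min (Real.rpow_nonneg (by norm_num) _) (Real.rpow_nonneg (by norm_num) _)
          rw [ENNReal.ofReal_rpow_of_nonneg h0 hτ.le]
          have hb : (min ((2:ℝ) ^ (-((k:ℝ) - t) * (1 - s))) ((2:ℝ) ^ (((k:ℝ) - t) * s))) ^ τ
              ≤ (2 * r0 ^ (k - n0).natAbs) ^ τ :=
            Real.rpow_le_rpow h0 (key k) hτ.le
          refine (ENNReal.ofReal_le_ofReal hb).trans (le_of_eq ?_)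
          rw [Real.mul_rpow (by norm_num) (by positivity), ENNReal.ofReal_mul (by positivity)]
          congr 1
          rw [← Real.rpow_natCast r0 _, ← Real.rpow_mul hr00.le,
            mul_comm (((k - n0).natAbs : ℝ)) τ, Real.rpow_mul hr00.le,
            Real.rpow_natCast, ENNReal.ofReal_pow hrτ.le]
      _ = ENNReal.ofReal ((2:ℝ)^τ) * ∑' k : ℤ, R ^ (k - n0).natAbs := ENNReal.tsum_mul_left
      _ = ENNReal.ofReal ((2:ℝ)^τ) * ∑' k : ℤ, R ^ k.natAbs := by
          congr 1
          simpa using (Equiv.subRight n0).tsum_eq (fun k : ℤ => R ^ k.natAbs)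
      _ ≤ SE := by
          rw [hSEdef]
          exact mul_le_mul_right (tsum_int_pow_natAbs_le hR1.le) _

lemma aux_key_bound (s : ℝ) (q : ℝ≥0∞) (hs0 : 0 < s) (hs1 : s < 1) (hq : 0 < q) :
    ∃ C1 : ℝ≥0∞, C1 ≠ ⊤ ∧ ∀ L M : ℝ, 0 ≤ L → 0 ≤ M →
      lqNorm q (fun k => ENNReal.ofReal
          (min (L * (2:ℝ) ^ (-(k:ℝ) * (1 - s))) ((2:ℝ) ^ (1 + s) * M * (2:ℝ) ^ ((k:ℝ) * s))))
        ≤ ENNReal.ofReal (2 * (1 + M) * (1 + L ^ s)) * C1 := by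
  obtain ⟨C1, hC1top, hC1⟩ := aux_C1 s q hs0 hs1 hq
  refine ⟨C1, hC1top, fun L M hL0 hM0 => ?_⟩
  rcases eq_or_lt_of_le hL0 with hL | hL
  · have hzero : (fun k : ℤ => ENNReal.ofReal
        (min (L * (2:ℝ) ^ (-(k:ℝ) * (1 - s))) ((2:ℝ) ^ (1 + s) * M * (2:ℝ) ^ ((k:ℝ) * s))))
        = fun _ => (0:ℝ≥0∞) := by
      funext k
      rw [← hL]
      simp [min_eq_left (by positivity : (0:ℝ) ≤ (2:ℝ) ^ (1 + s) * M * (2:ℝ) ^ ((k:ℝ) * s))]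
    rw [hzero, lqNorm_zero hq]
    exact zero_le
  rcases eq_or_lt_of_le hM0 with hM | hM
  · have hzero : (fun k : ℤ => ENNReal.ofReal
        (min (L * (2:ℝ) ^ (-(k:ℝ) * (1 - s))) ((2:ℝ) ^ (1 + s) * M * (2:ℝ) ^ ((k:ℝ) * s))))
        = fun _ => (0:ℝ≥0∞) := by
      funext k
      rw [← hM]
      simp [min_eq_right (by positivity : (0:ℝ) ≤ L * (2:ℝ) ^ (-(k:ℝ) * (1 - s)))]
    rw [hzero, lqNorm_zero hq]
    exact zero_le
  -- main case : L > 0, M > 0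
  set B : ℝ := (2:ℝ) ^ (1 + s) * M with hBdef
  have hB : 0 < B := by positivity
  set t : ℝ := Real.logb 2 (L / B) with htdef
  have h2t : (2:ℝ) ^ t = L / B := Real.rpow_logb two_pos (by norm_num) (div_pos hL hB)
  set A : ℝ := L ^ s * B ^ (1 - s) with hAdef
  have hA : 0 < A := by positivity
  have hBs : (0:ℝ) < B ^ (1 - s) := Real.rpow_pos_of_pos hB _
  have hLs : (0:ℝ) < L ^ s := Real.rpow_pos_of_pos hL _
  have hsc1 : A * (L / B) ^ (1 - s) = L := by
    rw [hAdef, Real.div_rpow hL0 hB.le, div_eq_mul_inv]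
    have h0 : L ^ s * B ^ (1-s) * (L ^ (1-s) * (B ^ (1-s))⁻¹)
        = (L ^ s * L ^ (1-s)) * (B ^ (1-s) * (B ^ (1-s))⁻¹) := by ring
    rw [h0, mul_inv_cancel₀ hBs.ne', mul_one, ← Real.rpow_add hL]
    norm_num
  have hsc2 : A * ((L / B) ^ s)⁻¹ = B := by
    rw [hAdef, Real.div_rpow hL0 hB.le, inv_div, div_eq_mul_inv]
    have h0 : L ^ s * B ^ (1-s) * (B ^ s * (L ^ s)⁻¹)
        = (B ^ (1-s) * B ^ s) * (L ^ s * (L ^ s)⁻¹) := by ring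
    rw [h0, mul_inv_cancel₀ hLs.ne', mul_one, ← Real.rpow_add hB]
    norm_num
  have claim1 : ∀ k : ℤ, L * (2:ℝ) ^ (-(k:ℝ) * (1 - s))
      = A * (2:ℝ) ^ (-((k:ℝ) - t) * (1 - s)) := by
    intro k
    have e1 : (2:ℝ) ^ (-((k:ℝ) - t) * (1 - s))
        = (L / B) ^ (1 - s) * (2:ℝ) ^ (-(k:ℝ) * (1 - s)) := by
      rw [← h2t, ← Real.rpow_mul (by norm_num : (0:ℝ) ≤ 2), ← Real.rpow_add two_pos]
      ring_nf
    rw [e1, ← mul_assoc, hsc1]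
  have claim2 : ∀ k : ℤ, B * (2:ℝ) ^ ((k:ℝ) * s)
      = A * (2:ℝ) ^ (((k:ℝ) - t) * s) := by
    intro k
    have e2 : (2:ℝ) ^ (((k:ℝ) - t) * s)
        = ((L / B) ^ s)⁻¹ * (2:ℝ) ^ ((k:ℝ) * s) := by
      rw [← Real.rpow_neg (div_pos hL hB).le, ← h2t,
        ← Real.rpow_mul (by norm_num : (0:ℝ) ≤ 2), ← Real.rpow_add two_pos]
      ring_nf
    rw [e2, ← mul_assoc, hsc2]
  have hident : (fun k : ℤ => ENNReal.ofReal
      (min (L * (2:ℝ) ^ (-(k:ℝ) * (1 - s))) (B * (2:ℝ) ^ ((k:ℝ) * s))))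
      = fun k : ℤ => ENNReal.ofReal A * ENNReal.ofReal
        (min ((2:ℝ) ^ (-((k:ℝ) - t) * (1 - s))) ((2:ℝ) ^ (((k:ℝ) - t) * s))) := by
    funext k
    rw [claim1 k, claim2 k, ← mul_min_of_nonneg _ _ hA.le, ENNReal.ofReal_mul hA.le]
  have hAbound : A ≤ 2 * (1 + M) * (1 + L ^ s) := by
    have hBb : B ^ (1 - s) ≤ 2 * (1 + M) := by
      rw [hBdef, Real.mul_rpow (by positivity) hM0, ← Real.rpow_mul (by norm_num : (0:ℝ) ≤ 2)]
      have h1 : (2:ℝ) ^ ((1 + s) * (1 - s)) ≤ 2 := by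
        nth_rewrite 2 [← Real.rpow_one 2]
        exact Real.rpow_le_rpow_of_exponent_le one_le_two (by nlinarith)
      have h2 : M ^ (1 - s) ≤ 1 + M := by
        rcases le_total M 1 with h | h
        · have := Real.rpow_le_one hM0 h (by linarith : (0:ℝ) ≤ 1 - s); linarith
        · have := Real.rpow_le_rpow_of_exponent_le h (by linarith : 1 - s ≤ 1)
          rw [Real.rpow_one] at this; linarith
      have h3 : (0:ℝ) ≤ M ^ (1 - s) := Real.rpow_nonneg hM0 _
      have h4 : (0:ℝ) < (2:ℝ) ^ ((1 + s) * (1 - s)) := Real.rpow_pos_of_pos two_pos _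
      nlinarith
    rw [hAdef]
    nlinarith [hLs, hBs, hM0]
  calc lqNorm q (fun k : ℤ => ENNReal.ofReal
        (min (L * (2:ℝ) ^ (-(k:ℝ) * (1 - s))) (B * (2:ℝ) ^ ((k:ℝ) * s))))
      = ENNReal.ofReal A * lqNorm q (fun k : ℤ => ENNReal.ofReal
          (min ((2:ℝ) ^ (-((k:ℝ) - t) * (1 - s))) ((2:ℝ) ^ (((k:ℝ) - t) * s)))) := by
        rw [hident]; exact lqNorm_smul hq _ _
    _ ≤ ENNReal.ofReal A * C1 := mul_le_mul_right (hC1 t) _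
    _ ≤ ENNReal.ofReal (2 * (1 + M) * (1 + L ^ s)) * C1 :=
        mul_le_mul_left (ENNReal.ofReal_le_ofReal hAbound) _

/-- An `L`-Lipschitz function `φ` on `Ω` supported in a bounded set `F ⊆ Ω`
belongs to `M^s_{p,q}(Ω)` (and to `N^s_{p,q}(Ω)`) with
`‖φ‖ ≤ C (1+‖φ‖_∞)(1+L^s) μ(F)^{1/p}`, where `C > 0` depends only on `s` and `q`. -/
theorem lipschitz_norm_estimate (s : ℝ) (q : ℝ≥0∞) (hs0 : 0 < s) (hs1 : s < 1) (hq : 0 < q) :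
    ∃ C : ℝ, 0 < C ∧
      ∀ (X : Type*) [MetricSpace X] [MeasurableSpace X] [BorelSpace X] (μ : Measure X),
        BallsPosFin μ →
        ∀ p : ℝ, 0 < p →
        ∀ (Ω F : Set X) (φ : X → ℝ) (L : ℝ),
          MeasurableSet Ω → MeasurableSet F → F ⊆ Ω → Bornology.IsBounded F →
          Measurable φ → 0 ≤ L →
          (∀ x ∈ Ω, ∀ y ∈ Ω, |φ x - φ y| ≤ L * dist x y) →
          {x | x ∈ Ω ∧ φ x ≠ 0} ⊆ F →
          (TLNorm μ s p q Ω φ ≠ ⊤ ∧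
            TLNorm μ s p q Ω φ ≤
              ENNReal.ofReal (C * (1 + sSup ((fun x => |φ x|) '' Ω)) * (1 + L ^ s))
                * μ F ^ (1/p)) ∧
          (BesovNorm μ s p q Ω φ ≠ ⊤ ∧
            BesovNorm μ s p q Ω φ ≤
              ENNReal.ofReal (C * (1 + sSup ((fun x => |φ x|) '' Ω)) * (1 + L ^ s))
                * μ F ^ (1/p)) := by
  obtain ⟨C1, hC1top, hKB⟩ := aux_key_bound s q hs0 hs1 hq
  set CE : ℝ≥0∞ := 1 + 2 * C1 with hCEdef
  have hCEtop : CE ≠ ⊤ := by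
    rw [hCEdef]
    exact ENNReal.add_ne_top.mpr ⟨ENNReal.one_ne_top,
      ENNReal.mul_ne_top (by norm_num) hC1top⟩
  have hCE1 : (1:ℝ≥0∞) ≤ CE := by rw [hCEdef]; exact le_self_add
  have hD : CE = ENNReal.ofReal CE.toReal := (ENNReal.ofReal_toReal hCEtop).symm
  refine ⟨CE.toReal, ENNReal.toReal_pos (by intro h; rw [h] at hCE1; simp at hCE1) hCEtop, ?_⟩
  intro Y _ _ _ μ hBalls p hp Ω F φ L hΩm hFm hFΩ hFb hφm hL0 hLip hsupp
  set M : ℝ := sSup ((fun x => |φ x|) '' Ω) with hMdef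
  have hφ0 : ∀ x ∈ Ω, x ∉ F → φ x = 0 := by
    intro x hx hxF
    by_contra h
    exact hxF (hsupp ⟨hx, h⟩)
  have hMfacts : 0 ≤ M ∧ ∀ x ∈ Ω, |φ x| ≤ M := by
    rcases Set.eq_empty_or_nonempty Ω with hΩe | ⟨x0, hx0⟩
    · constructor
      · rw [hMdef, hΩe]; simp [Real.sSup_empty]
      · intro x hx; rw [hΩe] at hx; exact absurd hx (Set.notMem_empty x)
    · have hbdd : BddAbove ((fun x => |φ x|) '' Ω) := by
        rcases F.eq_empty_or_nonempty with hFe | ⟨z, hz⟩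
        · refine ⟨0, fun v hv => ?_⟩
          obtain ⟨x, hx, rfl⟩ := hv
          show |φ x| ≤ 0
          have h0 : φ x = 0 := hφ0 x hx (by simp [hFe])
          simp [h0]
        · refine ⟨|φ z| + L * Metric.diam F, fun v hv => ?_⟩
          obtain ⟨x, hx, rfl⟩ := hv
          show |φ x| ≤ |φ z| + L * Metric.diam F
          by_cases hxF : x ∈ F
          · have h1 : |φ x - φ z| ≤ L * dist x z := hLip x hx z (hFΩ hz)
            have h2 : dist x z ≤ Metric.diam F := Metric.dist_le_diam_of_mem hFb hxF hz
            have h3 : |φ x| - |φ z| ≤ |φ x - φ z| := abs_sub_abs_le_abs_sub _ _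
            nlinarith [mul_le_mul_of_nonneg_left h2 hL0]
          · rw [hφ0 x hx hxF]
            have : (0:ℝ) ≤ L * Metric.diam F :=
              mul_nonneg hL0 Metric.diam_nonneg
            simp only [abs_zero]
            positivity
      exact ⟨le_trans (abs_nonneg _) (le_csSup hbdd ⟨x0, hx0, rfl⟩),
        fun x hx => le_csSup hbdd ⟨x, hx, rfl⟩⟩
  obtain ⟨hM0, hMb⟩ := hMfacts
  have hμF : μ F ≠ ⊤ := by
    rcases F.eq_empty_or_nonempty with hFe | ⟨z, hz⟩
    · simp [hFe]
    · obtain ⟨r, hr⟩ := (Metric.isBounded_iff_subset_closedBall z).mp hFb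
      have hsub2 : F ⊆ ball z (|r| + 1) := by
        intro w hw
        have := hr hw
        rw [Metric.mem_closedBall] at this
        rw [Metric.mem_ball]
        have : dist w z ≤ |r| := this.trans (le_abs_self r)
        linarith
      exact (lt_of_le_of_lt (measure_mono hsub2)
        (hBalls z (|r|+1) (by positivity)).2).ne
  set c : ℤ → ℝ := fun k =>
    min (L * (2:ℝ) ^ (-(k:ℝ) * (1 - s))) ((2:ℝ) ^ (1 + s) * M * (2:ℝ) ^ ((k:ℝ) * s))
    with hcdef
  have hc0 : ∀ k, 0 ≤ c k := fun k => le_min (by positivity) (by positivity)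
  set g : ℤ → Y → ℝ := fun k => F.indicator (fun _ => c k) with hgdef
  have hg0 : ∀ k x, 0 ≤ g k x := fun k x =>
    Set.indicator_nonneg (fun _ _ => hc0 k) x
  have hgrad : IsFracGrad μ s Ω φ g := by
    refine ⟨hg0, fun k => measurable_const.indicator hFm, ∅, Set.empty_subset _,
      measure_empty, ?_⟩
    intro k x hx y hy hd1 hd2
    have hxΩ : x ∈ Ω := hx.1
    have hyΩ : y ∈ Ω := hy.1
    set d : ℝ := dist x y with hddef
    have hd0 : 0 < d := lt_of_lt_of_le (Real.rpow_pos_of_pos two_pos _) hd1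
    have hds0 : (0:ℝ) ≤ d ^ s := Real.rpow_nonneg hd0.le _
    have hmain : min (L * d) (2 * M) ≤ d ^ s * c k := by
      have hA : L * d ≤ d ^ s * (L * (2:ℝ) ^ (-(k:ℝ) * (1 - s))) := by
        have hd1s : d ^ (1 - s) ≤ (2:ℝ) ^ (-(k:ℝ) * (1 - s)) := by
          have h := Real.rpow_le_rpow hd0.le hd2.le (by linarith : (0:ℝ) ≤ 1 - s)
          rwa [← Real.rpow_mul (by norm_num : (0:ℝ) ≤ 2)] at h
        have hdd : d ^ s * d ^ (1 - s) = d := by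
          rw [← Real.rpow_add hd0]; norm_num
        calc L * d = d ^ s * (L * d ^ (1 - s)) := by linear_combination (-L) * hdd
          _ ≤ d ^ s * (L * (2:ℝ) ^ (-(k:ℝ) * (1 - s))) := by
              have := mul_le_mul_of_nonneg_left
                (mul_le_mul_of_nonneg_left hd1s hL0) hds0
              linarith
      have hB2 : 2 * M ≤ d ^ s * ((2:ℝ) ^ (1 + s) * M * (2:ℝ) ^ ((k:ℝ) * s)) := by
        have hds : (2:ℝ) ^ ((-(k:ℝ) - 1) * s) ≤ d ^ s := by
          have h := Real.rpow_le_rpow (by positivity) hd1 hs0.le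
          rwa [← Real.rpow_mul (by norm_num : (0:ℝ) ≤ 2)] at h
        have hprod : (2:ℝ) ^ ((-(k:ℝ) - 1) * s) * ((2:ℝ) ^ (1 + s) * (2:ℝ) ^ ((k:ℝ) * s))
            = 2 := by
          rw [← Real.rpow_add two_pos, ← Real.rpow_add two_pos,
            show (-(k:ℝ) - 1) * s + ((1 + s) + (k:ℝ) * s) = (1:ℝ) by ring, Real.rpow_one]
        have hW : (0:ℝ) ≤ (2:ℝ) ^ (1 + s) * (2:ℝ) ^ ((k:ℝ) * s) * M := by positivity
        have := mul_le_mul_of_nonneg_right hds hW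
        nlinarith [hprod]
      rw [hcdef]
      rw [mul_min_of_nonneg _ _ hds0]
      exact le_min ((min_le_left _ _).trans hA) ((min_le_right _ _).trans hB2)
    by_cases hxF : x ∈ F
    · have h1 : |φ x - φ y| ≤ min (L * d) (2 * M) := by
        refine le_min (hLip x hxΩ y hyΩ) ?_
        have h2 : |φ x - φ y| ≤ |φ x| + |φ y| := by
          have := abs_add_le (φ x) (-(φ y))
          simpa [sub_eq_add_neg] using this
        have := hMb x hxΩ
        have := hMb y hyΩ
        linarith
      have hgx : g k x = c k := by rw [hgdef]; simp [Set.indicator_of_mem hxF]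
      have := h1.trans hmain
      have hgy := hg0 k y
      rw [hgx]
      nlinarith [hds0]
    · by_cases hyF : y ∈ F
      · have h1 : |φ x - φ y| ≤ min (L * d) (2 * M) := by
          rw [abs_sub_comm]
          refine le_min ?_ ?_
          · have := hLip y hyΩ x hxΩ
            rwa [dist_comm y x] at this
          · have h2 : |φ y - φ x| ≤ |φ y| + |φ x| := by
              have := abs_add_le (φ y) (-(φ x))
              simpa [sub_eq_add_neg] using this
            have := hMb x hxΩ
            have := hMb y hyΩ
            linarith
        have hgy : g k y = c k := by rw [hgdef]; simp [Set.indicator_of_mem hyF]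
        have := h1.trans hmain
        have hgx := hg0 k x
        rw [hgy]
        nlinarith [hds0]
      · have hx0 : φ x = 0 := hφ0 x hxΩ hxF
        have hy0 : φ y = 0 := hφ0 y hyΩ hyF
        rw [hx0, hy0]
        simp only [sub_zero, abs_zero]
        have := hg0 k x
        have := hg0 k y
        positivity
  -- the L^p bound for φ
  have hLp : LpS μ p Ω φ ≤ ENNReal.ofReal (1 + M) * μ F ^ (1/p) := by
    have hae : ∀ᵐ x ∂μ.restrict Ω, ENNReal.ofReal |φ x|
        ≤ F.indicator (fun _ => ENNReal.ofReal (1 + M)) x := by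
      refine ae_restrict_of_forall_mem hΩm fun x hx => ?_
      by_cases hxF : x ∈ F
      · rw [Set.indicator_of_mem hxF]
        exact ENNReal.ofReal_le_ofReal (by have := hMb x hx; linarith)
      · rw [hφ0 x hx hxF]
        simp
    exact (LpE_mono_ae hp hae).trans
      (le_of_eq (LpE_indicator_const μ hp hFm hFΩ _))
  set K : ℝ≥0∞ := lqNorm q (fun k => ENNReal.ofReal (c k)) with hKdef
  have hK : K ≤ ENNReal.ofReal (2 * (1 + M) * (1 + L ^ s)) * C1 := hKB L M hL0 hM0
  -- Triebel--Lizorkin gradient norm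
  have htl : tlGradNorm μ p q Ω g = K * μ F ^ (1/p) := by
    have hfun : (fun x => lqNorm q fun k => ENNReal.ofReal (g k x))
        = F.indicator (fun _ => K) := by
      funext x
      by_cases hxF : x ∈ F
      · rw [Set.indicator_of_mem hxF, hKdef]
        congr 1
        funext k
        rw [hgdef]
        simp [Set.indicator_of_mem hxF]
      · rw [Set.indicator_of_notMem hxF]
        have : (fun k : ℤ => ENNReal.ofReal (g k x)) = fun _ => (0:ℝ≥0∞) := by
          funext k
          rw [hgdef]
          simp [Set.indicator_of_notMem hxF]
        rw [this, lqNorm_zero hq]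
    calc tlGradNorm μ p q Ω g
        = LpE (μ.restrict Ω) p (F.indicator (fun _ => K)) := by
          rw [tlGradNorm, hfun]
      _ = K * μ F ^ (1/p) := LpE_indicator_const μ hp hFm hFΩ _
  -- Besov gradient norm
  have hbes : besovGradNorm μ p q Ω g = μ F ^ (1/p) * K := by
    have hLpg : (fun k => LpS μ p Ω (g k))
        = fun k => μ F ^ (1/p) * ENNReal.ofReal (c k) := by
      funext k
      have hfun : (fun x => ENNReal.ofReal |g k x|)
          = F.indicator (fun _ => ENNReal.ofReal (c k)) := by
        funext x
        by_cases hxF : x ∈ F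
        · rw [Set.indicator_of_mem hxF, hgdef]
          simp [Set.indicator_of_mem hxF, abs_of_nonneg (hc0 k)]
        · rw [Set.indicator_of_notMem hxF, hgdef]
          simp [Set.indicator_of_notMem hxF]
      calc LpS μ p Ω (g k)
          = LpE (μ.restrict Ω) p (F.indicator (fun _ => ENNReal.ofReal (c k))) := by
            rw [LpS, hfun]
        _ = ENNReal.ofReal (c k) * μ F ^ (1/p) := LpE_indicator_const μ hp hFm hFΩ _
        _ = μ F ^ (1/p) * ENNReal.ofReal (c k) := mul_comm _ _
    rw [besovGradNorm, hLpg, lqNorm_smul hq, hKdef]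
  -- upper bound on μ F ^ (1/p)
  have hμFp : μ F ^ (1/p) ≠ ⊤ :=
    (ENNReal.rpow_lt_top_of_nonneg (by positivity) hμF).ne
  -- scalar combination
  have hsc : ENNReal.ofReal (1 + M) + ENNReal.ofReal (2 * (1 + M) * (1 + L ^ s)) * C1
      ≤ ENNReal.ofReal (CE.toReal * (1 + M) * (1 + L ^ s)) := by
    have hLsnn : (0:ℝ) ≤ L ^ s := Real.rpow_nonneg hL0 _
    have heq : ENNReal.ofReal (CE.toReal * (1 + M) * (1 + L ^ s))
        = ENNReal.ofReal ((1 + M) * (1 + L ^ s)) * CE := by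
      conv_rhs => rw [hD]
      rw [← ENNReal.ofReal_mul (by positivity)]
      congr 1
      ring
    rw [heq, hCEdef]
    conv_rhs => rw [mul_add, mul_one]
    refine add_le_add ?_ ?_
    · exact ENNReal.ofReal_le_ofReal (by nlinarith)
    · rw [show (2:ℝ) * (1 + M) * (1 + L ^ s) = ((1 + M) * (1 + L ^ s)) * 2 by ring,
        ENNReal.ofReal_mul (by positivity), mul_assoc]
      gcongr
      simp [ENNReal.ofReal_ofNat]
  have hcombine : ∀ G : ℝ≥0∞,
      G ≤ ENNReal.ofReal (2 * (1 + M) * (1 + L ^ s)) * C1 * μ F ^ (1/p) →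
      LpS μ p Ω φ + G
        ≤ ENNReal.ofReal (CE.toReal * (1 + M) * (1 + L ^ s)) * μ F ^ (1/p) := by
    intro G hG
    calc LpS μ p Ω φ + G
        ≤ ENNReal.ofReal (1 + M) * μ F ^ (1/p)
          + ENNReal.ofReal (2 * (1 + M) * (1 + L ^ s)) * C1 * μ F ^ (1/p) :=
          add_le_add hLp hG
      _ = (ENNReal.ofReal (1 + M)
          + ENNReal.ofReal (2 * (1 + M) * (1 + L ^ s)) * C1) * μ F ^ (1/p) :=
          (add_mul _ _ _).symm
      _ ≤ ENNReal.ofReal (CE.toReal * (1 + M) * (1 + L ^ s)) * μ F ^ (1/p) :=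
          mul_le_mul_left hsc _
  have hRHStop : ENNReal.ofReal (CE.toReal * (1 + M) * (1 + L ^ s)) * μ F ^ (1/p) ≠ ⊤ :=
    ENNReal.mul_ne_top ENNReal.ofReal_ne_top hμFp
  have hTL : TLNorm μ s p q Ω φ
      ≤ ENNReal.ofReal (CE.toReal * (1 + M) * (1 + L ^ s)) * μ F ^ (1/p) := by
    rw [TLNorm]
    refine hcombine _ ?_
    refine le_trans (iInf₂_le g hgrad) ?_
    rw [htl]
    exact mul_le_mul_left hK _
  have hBN : BesovNorm μ s p q Ω φ
      ≤ ENNReal.ofReal (CE.toReal * (1 + M) * (1 + L ^ s)) * μ F ^ (1/p) := by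
    rw [BesovNorm]
    refine hcombine _ ?_
    refine le_trans (iInf₂_le g hgrad) ?_
    rw [hbes]
    calc μ F ^ (1/p) * K
        ≤ μ F ^ (1/p) * (ENNReal.ofReal (2 * (1 + M) * (1 + L ^ s)) * C1) :=
          mul_le_mul_right hK _
      _ = ENNReal.ofReal (2 * (1 + M) * (1 + L ^ s)) * C1 * μ F ^ (1/p) := by ring
  exact ⟨⟨fun h => hRHStop (top_le_iff.mp (h ▸ hTL)), hTL⟩,
    ⟨fun h => hRHStop (top_le_iff.mp (h ▸ hBN)), hBN⟩⟩


end
end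

section
/- Let (X,d,μ) be a metric measure space with a doubling measure μ and let 0 < p < ∞. Then there is a constant C ≥ 1, depending only on p and the doubling constant of μ, such that for every f ∈ L^p(X) + M^{1,p}(X) and every t > 0: C^{-1} ( K(f,t; L^p(X), Ṁ^{1,p}(X)) + min{1,t} ‖f‖_{L^p(X)} ) ≤ K(f,t; L^p(X), M^{1,p}(X)) ≤ C ( K(f,t; L^p(X), Ṁ^{1,p}(X)) + min{1,t} ‖f‖_{L^p(X)} ). -/
open MeasureTheory Metric Set
open scoped ENNReal NNReal
noncomputable section

variable {X : Type*} [MetricSpace X] [MeasurableSpace X]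

variable {X : Type*} [MetricSpace X] [MeasurableSpace X]

/-- `g` is a (Hajłasz) `1`-gradient of `u`. -/
def IsOneGrad (μ : Measure X) (u g : X → ℝ) : Prop :=
  (∀ x, 0 ≤ g x) ∧ Measurable g ∧
    ∃ E : Set X, μ E = 0 ∧ ∀ x ∉ E, ∀ y ∉ E, |u x - u y| ≤ dist x y * (g x + g y)

/-- The homogeneous Hajłasz seminorm `‖u‖_{Ṁ^{1,p}(X)}`. -/
def hajlaszSemi (μ : Measure X) (p : ℝ) (u : X → ℝ) : ℝ≥0∞ :=
  ⨅ (g : X → ℝ) (_ : IsOneGrad μ u g), LpS μ p Set.univ g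

/-- The `K`-functional for the couple `(L^p(X), Ṁ^{1,p}(X))`. -/
def Khom (μ : Measure X) (p : ℝ) (f : X → ℝ) (t : ℝ) : ℝ≥0∞ :=
  ⨅ (g : X → ℝ) (h : X → ℝ) (_ : f = g + h) (_ : Measurable g) (_ : Measurable h),
    LpS μ p Set.univ g + ENNReal.ofReal t * hajlaszSemi μ p h

/-- `E_p(f,t) = (∫_X ⨍_{B(x,t)} |f(x)-f(y)|^p dμ(y) dμ(x))^{1/p}`. -/
def Ep (μ : Measure X) (p : ℝ) (f : X → ℝ) (t : ℝ) : ℝ≥0∞ :=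
  (∫⁻ x, (μ (ball x t))⁻¹ * ∫⁻ y in ball x t, ENNReal.ofReal |f x - f y| ^ p ∂μ ∂μ) ^ (1/p)

/-- The homogeneous Hajłasz–Besov seminorm `‖u‖_{Ṅ^s_{p,q}(X)}`. -/
def besovSemi (μ : Measure X) (s p : ℝ) (q : ℝ≥0∞) (u : X → ℝ) : ℝ≥0∞ :=
  ⨅ (g : ℤ → X → ℝ) (_ : IsFracGrad μ s Set.univ u g), besovGradNorm μ p q Set.univ g

/-- The real interpolation norm `‖·‖_{(A₀,A₁)_{θ,q}}` built from a `K`-functional. -/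
def interpNormK (K : ℝ → ℝ≥0∞) (θ : ℝ) (q : ℝ≥0∞) : ℝ≥0∞ :=
  if q = ⊤ then ⨆ t : {t : ℝ // 0 < t}, ENNReal.ofReal ((t : ℝ) ^ (-θ)) * K t
  else (∫⁻ t in Set.Ioi (0:ℝ),
    (ENNReal.ofReal (t ^ (-θ)) * K t) ^ q.toReal * ENNReal.ofReal t⁻¹) ^ (1 / q.toReal)

/-- The `K`-functional for the couple `(L^p(X), M^{1,p}(X))`. -/
def Kinhom (μ : Measure X) (p : ℝ) (f : X → ℝ) (t : ℝ) : ℝ≥0∞ :=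
  ⨅ (g : X → ℝ) (h : X → ℝ) (_ : f = g + h) (_ : Measurable g) (_ : Measurable h),
    LpS μ p Set.univ g + ENNReal.ofReal t * (LpS μ p Set.univ h + hajlaszSemi μ p h)

private lemma rpow_add_le_aux (r : ℝ) (hr : 0 ≤ r) (A B : ℝ≥0∞) :
    (A + B) ^ r ≤ 2 ^ r * (A ^ r + B ^ r) := by
  calc (A + B) ^ r ≤ (2 * max A B) ^ r := by
        apply ENNReal.rpow_le_rpow _ hr
        rw [two_mul]
        exact add_le_add (le_max_left _ _) (le_max_right _ _)
    _ = 2 ^ r * (max A B) ^ r := ENNReal.mul_rpow_of_nonneg _ _ hr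
    _ ≤ 2 ^ r * (A ^ r + B ^ r) := by
        gcongr
        rcases max_cases A B with ⟨h, _⟩ | ⟨h, _⟩ <;> rw [h]
        · exact le_self_add
        · exact le_add_self

private lemma LpS_add_le' (μ : Measure X) {p : ℝ} (hp : 0 < p)
    {u v : X → ℝ} (hu : Measurable u) (hv : Measurable v) :
    LpS μ p Set.univ (u + v) ≤ 2 ^ (1 + 1/p) * (LpS μ p Set.univ u + LpS μ p Set.univ v) := by
  have hp' : 0 ≤ p := hp.le
  have hip : (0:ℝ) ≤ 1/p := by positivity
  set ν := μ.restrict Set.univ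
  set I := ∫⁻ x, ENNReal.ofReal |u x| ^ p ∂ν with hI
  set J := ∫⁻ x, ENNReal.ofReal |v x| ^ p ∂ν with hJ
  have hmeasu : Measurable fun x => ENNReal.ofReal |u x| ^ p :=
    (hu.abs.ennreal_ofReal).pow_const p
  have hInt : (∫⁻ x, ENNReal.ofReal |(u + v) x| ^ p ∂ν) ≤ 2 ^ p * (I + J) := by
    calc (∫⁻ x, ENNReal.ofReal |(u + v) x| ^ p ∂ν)
        ≤ ∫⁻ x, 2 ^ p * (ENNReal.ofReal |u x| ^ p + ENNReal.ofReal |v x| ^ p) ∂ν := by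
          apply lintegral_mono
          intro x
          calc ENNReal.ofReal |(u + v) x| ^ p
              ≤ (ENNReal.ofReal |u x| + ENNReal.ofReal |v x|) ^ p := by
                apply ENNReal.rpow_le_rpow _ hp'
                rw [← ENNReal.ofReal_add (abs_nonneg _) (abs_nonneg _)]
                exact ENNReal.ofReal_le_ofReal (abs_add_le _ _)
            _ ≤ _ := rpow_add_le_aux p hp' _ _
      _ = 2 ^ p * (I + J) := by
          rw [lintegral_const_mul' _ _ (ENNReal.rpow_lt_top_of_nonneg hp' (by norm_num)).ne,
            lintegral_add_left hmeasu]
  calc LpS μ p Set.univ (u + v)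
      ≤ (2 ^ p * (I + J)) ^ (1/p) := ENNReal.rpow_le_rpow hInt hip
    _ = 2 * (I + J) ^ (1/p) := by
        rw [ENNReal.mul_rpow_of_nonneg _ _ hip, ← ENNReal.rpow_mul, mul_one_div,
          div_self hp.ne', ENNReal.rpow_one]
    _ ≤ 2 * (2 ^ (1/p) * (I ^ (1/p) + J ^ (1/p))) := by
        gcongr
        exact rpow_add_le_aux _ hip _ _
    _ = 2 ^ (1 + 1/p) * (I ^ (1/p) + J ^ (1/p)) := by
        rw [← mul_assoc, ENNReal.rpow_add _ _ (by norm_num) (by norm_num), ENNReal.rpow_one]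
    _ = _ := rfl

private lemma LpS_neg' (μ : Measure X) (p : ℝ) (S : Set X) (g : X → ℝ) :
    LpS μ p S (fun x => -(g x)) = LpS μ p S g := by
  unfold LpS LpE
  simp [abs_neg]

private lemma LpS_zero' (μ : Measure X) {p : ℝ} (hp : 0 < p) (S : Set X) :
    LpS μ p S (fun _ => (0:ℝ)) = 0 := by
  unfold LpS LpE
  simp only [abs_zero, ENNReal.ofReal_zero]
  rw [lintegral_congr (fun x => ENNReal.zero_rpow_of_pos hp), lintegral_zero,
    ENNReal.zero_rpow_of_pos (by positivity : (0:ℝ) < 1/p)]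

private lemma key_forward {c T m G H Sh F Kh : ℝ≥0∞}
    (hK : Kh ≤ G + T * Sh) (hF : F ≤ c * (G + H)) (hm1 : m ≤ 1) (hmT : m ≤ T) :
    Kh + m * F ≤ (G + T * (H + Sh)) * (1 + c) := by
  calc Kh + m * F ≤ (G + T * (H + Sh)) + c * (G + T * (H + Sh)) := by
        apply add_le_add
        · refine hK.trans ?_
          gcongr
          exact le_add_self
        · calc m * F ≤ m * (c * (G + H)) := by gcongr
            _ = c * (m * G) + c * (m * H) := by ring
            _ ≤ c * (1 * G) + c * (T * H) := by gcongr
            _ = c * (G + T * H) := by ring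
            _ ≤ c * (G + T * (H + Sh)) := by gcongr; exact le_self_add
    _ = (G + T * (H + Sh)) * (1 + c) := by ring

private lemma key_backward {c T G H Sh F Ki : ℝ≥0∞}
    (hKi : Ki ≤ G + T * (H + Sh)) (hH : H ≤ c * (F + G)) (hT1 : T ≤ 1) :
    Ki ≤ ((G + T * Sh) + T * F) * (1 + c) := by
  calc Ki ≤ G + T * (H + Sh) := hKi
    _ = G + T * H + T * Sh := by ring
    _ ≤ G + T * (c * (F + G)) + T * Sh := by gcongr
    _ = 1 * G + c * (T * G) + 1 * (T * Sh) + c * (T * F) := by ring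
    _ ≤ 1 * G + c * (1 * G) + (1 + c) * (T * Sh) + (1 + c) * (T * F) := by
        refine add_le_add (add_le_add (add_le_add le_rfl ?_) ?_) ?_
        · exact mul_le_mul_right (mul_le_mul_left hT1 _) _
        · exact mul_le_mul_left le_self_add _
        · exact mul_le_mul_left le_add_self _
    _ = ((G + T * Sh) + T * F) * (1 + c) := by ring

/-- `K(f,t;L^p,M^{1,p}) ≈ K(f,t;L^p,Ṁ^{1,p}) + min{1,t}‖f‖_{L^p}`, with a
constant depending only on `p` and the doubling constant. -/
theorem Kfunctional_hom_inhom (p : ℝ) (hp : 0 < p) (cD : ℝ≥0∞) :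
    ∃ C : ℝ, 1 ≤ C ∧
      ∀ (X : Type*) [MetricSpace X] [MeasurableSpace X] [BorelSpace X] (μ : Measure X),
        IsDoubling μ cD → BallsPosFin μ →
        ∀ f : X → ℝ, Measurable f →
          (∃ g h : X → ℝ, f = g + h ∧ Measurable g ∧ Measurable h ∧
            LpS μ p Set.univ g ≠ ⊤ ∧ LpS μ p Set.univ h ≠ ⊤ ∧ hajlaszSemi μ p h ≠ ⊤) →
        ∀ t : ℝ, 0 < t →
          Khom μ p f t + ENNReal.ofReal (min 1 t) * LpS μ p Set.univ f
            ≤ ENNReal.ofReal C * Kinhom μ p f t ∧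
          Kinhom μ p f t ≤ ENNReal.ofReal C *
            (Khom μ p f t + ENNReal.ofReal (min 1 t) * LpS μ p Set.univ f) := by
  classical
  have h2pos : (0:ℝ) < 2 ^ (1 + 1/p) := Real.rpow_pos_of_pos two_pos _
  refine ⟨1 + 2 ^ (1 + 1/p), by linarith, ?_⟩
  intro X _ _ _ μ _ _ f hf _ t ht
  have hcne : ((2:ℝ≥0∞) ^ (1 + 1/p)) ≠ ⊤ :=
    (ENNReal.rpow_lt_top_of_nonneg (by positivity) (by norm_num)).ne
  have hcof : ENNReal.ofReal (1 + 2 ^ (1 + 1/p)) = 1 + (2:ℝ≥0∞) ^ (1 + 1/p) := by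
    rw [ENNReal.ofReal_add zero_le_one h2pos.le, ENNReal.ofReal_one,
      ← ENNReal.ofReal_rpow_of_pos two_pos]
    norm_num
  rw [hcof]
  set c : ℝ≥0∞ := (2:ℝ≥0∞) ^ (1 + 1/p) with hc
  have ha0 : (1 + c) ≠ 0 := by simp
  have hatop : (1 + c) ≠ ⊤ := by
    simp [ENNReal.add_ne_top, hcne]
  have hzero : hajlaszSemi μ p (fun _ => (0:ℝ)) = 0 := by
    apply le_antisymm _ zero_le
    have hgrad : IsOneGrad μ (fun _ => (0:ℝ)) (fun _ => (0:ℝ)) :=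
      ⟨fun _ => le_rfl, measurable_const, ∅, measure_empty, fun x _ y _ => by simp⟩
    calc hajlaszSemi μ p (fun _ => (0:ℝ)) ≤ LpS μ p Set.univ (fun _ => (0:ℝ)) :=
          iInf_le_of_le (fun _ => 0) (iInf_le_of_le hgrad le_rfl)
      _ = 0 := LpS_zero' μ hp _
  constructor
  · -- forward inequality
    rw [mul_comm (1 + c) (Kinhom μ p f t),
      ← ENNReal.div_le_iff_le_mul (Or.inl ha0) (Or.inl hatop)]
    unfold Kinhom
    simp only [le_iInf_iff]
    intro g h hfgh hg hh
    rw [ENNReal.div_le_iff_le_mul (Or.inl ha0) (Or.inl hatop)]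
    refine key_forward ?_ ?_ ?_ ?_
    · exact iInf_le_of_le g <| iInf_le_of_le h <| iInf_le_of_le hfgh <|
        iInf_le_of_le hg <| iInf_le_of_le hh le_rfl
    · rw [hfgh]
      exact LpS_add_le' μ hp hg hh
    · exact ENNReal.ofReal_le_one.mpr (min_le_left _ _)
    · exact ENNReal.ofReal_le_ofReal (min_le_right _ _)
  · -- backward inequality
    rcases le_total 1 t with h1t | ht1
    · -- t ≥ 1
      have hm' : ENNReal.ofReal (min 1 t) = 1 := by
        rw [min_eq_left h1t, ENNReal.ofReal_one]
      have hK0 : Kinhom μ p f t ≤ LpS μ p Set.univ f := by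
        have hdec : f = f + fun _ => (0:ℝ) := by funext x; simp
        have h0 : Kinhom μ p f t ≤ LpS μ p Set.univ f +
            ENNReal.ofReal t * (LpS μ p Set.univ (fun _ => (0:ℝ)) +
              hajlaszSemi μ p (fun _ => (0:ℝ))) :=
          iInf_le_of_le f <| iInf_le_of_le (fun _ => 0) <| iInf_le_of_le hdec <|
            iInf_le_of_le hf <| iInf_le_of_le measurable_const le_rfl
        rwa [LpS_zero' μ hp, hzero, add_zero, mul_zero, add_zero] at h0
      calc Kinhom μ p f t ≤ LpS μ p Set.univ f := hK0
        _ ≤ Khom μ p f t + ENNReal.ofReal (min 1 t) * LpS μ p Set.univ f := by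
            rw [hm', one_mul]; exact le_add_self
        _ ≤ (1 + c) * (Khom μ p f t + ENNReal.ofReal (min 1 t) * LpS μ p Set.univ f) :=
            le_mul_of_one_le_left' le_self_add
    · -- t ≤ 1
      have hm' : ENNReal.ofReal (min 1 t) = ENNReal.ofReal t := by rw [min_eq_right ht1]
      have hT1 : ENNReal.ofReal t ≤ 1 := ENNReal.ofReal_le_one.mpr ht1
      rw [hm', mul_comm, ← ENNReal.div_le_iff_le_mul (Or.inl ha0) (Or.inl hatop),
        ← tsub_le_iff_right]
      unfold Khom
      simp only [le_iInf_iff]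
      intro g h hfgh hg hh
      rw [tsub_le_iff_right, ENNReal.div_le_iff_le_mul (Or.inl ha0) (Or.inl hatop)]
      refine key_backward (H := LpS μ p Set.univ h) ?_ ?_ hT1
      · exact iInf_le_of_le g <| iInf_le_of_le h <| iInf_le_of_le hfgh <|
          iInf_le_of_le hg <| iInf_le_of_le hh le_rfl
      · have hgh : h = f + fun x => -(g x) := by
          funext x
          have hx := congrFun hfgh x
          simp only [Pi.add_apply] at hx ⊢
          linarith
        calc LpS μ p Set.univ h = LpS μ p Set.univ (f + fun x => -(g x)) := by rw [← hgh]
          _ ≤ c * (LpS μ p Set.univ f + LpS μ p Set.univ (fun x => -(g x))) :=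
              LpS_add_le' μ hp hf hg.neg
          _ = c * (LpS μ p Set.univ f + LpS μ p Set.univ g) := by rw [LpS_neg']

end
end

section
/- Let S ⊂ ℝⁿ be a measurable set (with the Euclidean metric and Lebesgue measure), and let 0 < s < 1, 0 < p < ∞, 0 < q ≤ ∞. There is a constant C > 0, depending only on n, s, p, q, such that for every measurable function u : S → ℝ, ‖u‖_{B^s_{p,q}(S)} ≤ C ‖u‖_{N^s_{p,q}(S)}; in particular N^s_{p,q}(S) ⊂ B^s_{p,q}(S). -/
open MeasureTheory Metric Set
open scoped ENNReal NNReal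
noncomputable section

variable {X : Type*} [MetricSpace X] [MeasurableSpace X]

/-- The `L^p`-modulus of smoothness `ω(u,S,t)_p` on a subset `S ⊆ ℝⁿ` (in `ℝ≥0∞`). -/
def omegaMod {n : ℕ} (S : Set (EuclideanSpace ℝ (Fin n))) (u : EuclideanSpace ℝ (Fin n) → ℝ)
    (p t : ℝ) : ℝ≥0∞ :=
  ⨆ h : {h : EuclideanSpace ℝ (Fin n) // ‖h‖ ≤ t},
    (∫⁻ x in {x | x ∈ S ∧ x + (h : EuclideanSpace ℝ (Fin n)) ∈ S},
      ENNReal.ofReal |u (x + (h : EuclideanSpace ℝ (Fin n))) - u x| ^ p ∂volume) ^ (1/p)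

/-- The Besov norm `‖u‖_{B^s_{p,q}(S)}` defined via the `L^p`-modulus of smoothness. -/
def modBesovNorm {n : ℕ} (S : Set (EuclideanSpace ℝ (Fin n)))
    (u : EuclideanSpace ℝ (Fin n) → ℝ) (s p : ℝ) (q : ℝ≥0∞) : ℝ≥0∞ :=
  LpS volume p S u +
    if q = ⊤ then ⨆ t : {t : ℝ // 0 < t ∧ t < 1},
      ENNReal.ofReal ((t : ℝ) ^ (-s)) * omegaMod S u p (t : ℝ)
    else (∫⁻ t in Ioo (0:ℝ) 1,
      (ENNReal.ofReal (t ^ (-s)) * omegaMod S u p t) ^ q.toReal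
        * ENNReal.ofReal t⁻¹) ^ (1 / q.toReal)

section AuxProof

variable {n : ℕ}

private lemma rpow_add_le' (p : ℝ) (hp : 0 ≤ p) (a b : ℝ≥0∞) :
    (a + b) ^ p ≤ 2 ^ p * (a ^ p + b ^ p) := by
  calc (a + b) ^ p ≤ (2 * (a ⊔ b)) ^ p := by
        apply ENNReal.rpow_le_rpow _ hp
        rw [two_mul]
        exact add_le_add le_sup_left le_sup_right
    _ = 2 ^ p * (a ⊔ b) ^ p := ENNReal.mul_rpow_of_nonneg _ _ hp
    _ ≤ 2 ^ p * (a ^ p + b ^ p) := by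
        gcongr
        rcases le_total a b with hab | hab
        · rw [sup_of_le_right hab]; exact le_add_self
        · rw [sup_of_le_left hab]; exact le_self_add

private lemma core_estimate {s p : ℝ} (hp : 0 < p)
    {S : Set (EuclideanSpace ℝ (Fin n))} (hS : MeasurableSet S)
    {u : EuclideanSpace ℝ (Fin n) → ℝ} {g : ℤ → EuclideanSpace ℝ (Fin n) → ℝ}
    (hg : IsFracGrad volume s S u g)
    (h : EuclideanSpace ℝ (Fin n)) (j : ℤ)
    (hj1 : (2:ℝ) ^ (-(j:ℝ) - 1) ≤ ‖h‖) (hj2 : ‖h‖ < (2:ℝ) ^ (-(j:ℝ))) :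
    (∫⁻ x in {x | x ∈ S ∧ x + h ∈ S},
        ENNReal.ofReal |u (x + h) - u x| ^ p ∂volume) ^ (1/p)
      ≤ 2 * (2:ℝ≥0∞) ^ (1/p) * ENNReal.ofReal (‖h‖ ^ s) * LpS volume p S (g j) := by
  obtain ⟨hgpos, hgmeas, E0, hE0S, hE0, hprop⟩ := hg
  have hmp : MeasurePreserving (· + h) (volume : Measure (EuclideanSpace ℝ (Fin n))) volume :=
    measurePreserving_add_right volume h
  have hemb : MeasurableEmbedding (· + h : EuclideanSpace ℝ (Fin n) → _) :=
    measurableEmbedding_addRight h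
  set T : Set (EuclideanSpace ℝ (Fin n)) := S ∩ ((· + h) ⁻¹' S) with hTdef
  have hset : {x : EuclideanSpace ℝ (Fin n) | x ∈ S ∧ x + h ∈ S} = T := rfl
  have hTm : MeasurableSet T := hS.inter (hemb.measurable hS)
  set N : Set (EuclideanSpace ℝ (Fin n)) := E0 ∪ ((· + h) ⁻¹' E0) with hNdef
  have hN : volume N = 0 := by
    obtain ⟨E1, hsub, hE1m, hE1⟩ := exists_measurable_superset_of_null hE0
    refine measure_union_null hE0 (measure_mono_null (preimage_mono hsub) ?_)
    rw [hmp.measure_preimage hE1m.nullMeasurableSet]; exact hE1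
  set Bp : ℝ≥0∞ := ∫⁻ y in S, (ENNReal.ofReal (g j y)) ^ p ∂volume with hBp
  have hBpLp : Bp ^ (1/p) = LpS volume p S (g j) := by
    rw [LpS, LpE, hBp]
    congr 1
    refine lintegral_congr fun x => ?_
    rw [abs_of_nonneg (hgpos j x)]
  have hae : ∀ᵐ x ∂(volume.restrict T), ENNReal.ofReal |u (x + h) - u x| ^ p ≤
      (ENNReal.ofReal (‖h‖ ^ s) ^ p * 2 ^ p) *
        ((ENNReal.ofReal (g j (x + h))) ^ p + (ENNReal.ofReal (g j x)) ^ p) := by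
    have h1 : ∀ᵐ x ∂(volume.restrict T), x ∈ T := ae_restrict_mem hTm
    have h2 : ∀ᵐ x ∂(volume.restrict T), x ∉ N := by
      have hz : (volume.restrict T) N = 0 :=
        le_antisymm ((Measure.restrict_apply_le T N).trans hN.le) zero_le
      rw [ae_iff]; simpa using hz
    filter_upwards [h1, h2] with x hxT hxN
    have hx1 : x + h ∈ S \ E0 := ⟨hxT.2, fun hc => hxN (Or.inr hc)⟩
    have hx2 : x ∈ S \ E0 := ⟨hxT.1, fun hc => hxN (Or.inl hc)⟩
    have hd : dist (x + h) x = ‖h‖ := by rw [dist_eq_norm, add_sub_cancel_left]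
    have key := hprop j (x + h) hx1 x hx2 (by rw [hd]; exact hj1) (by rw [hd]; exact hj2)
    rw [hd] at key
    calc ENNReal.ofReal |u (x + h) - u x| ^ p
        ≤ ENNReal.ofReal (‖h‖ ^ s * (g j (x + h) + g j x)) ^ p :=
          ENNReal.rpow_le_rpow (ENNReal.ofReal_le_ofReal key) hp.le
      _ = (ENNReal.ofReal (‖h‖ ^ s) *
            (ENNReal.ofReal (g j (x + h)) + ENNReal.ofReal (g j x))) ^ p := by
          rw [ENNReal.ofReal_mul (Real.rpow_nonneg (norm_nonneg _) _),
            ENNReal.ofReal_add (hgpos _ _) (hgpos _ _)]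
      _ = ENNReal.ofReal (‖h‖ ^ s) ^ p *
            (ENNReal.ofReal (g j (x + h)) + ENNReal.ofReal (g j x)) ^ p :=
          ENNReal.mul_rpow_of_nonneg _ _ hp.le
      _ ≤ ENNReal.ofReal (‖h‖ ^ s) ^ p *
            (2 ^ p * ((ENNReal.ofReal (g j (x + h))) ^ p + (ENNReal.ofReal (g j x)) ^ p)) :=
          mul_le_mul_right (rpow_add_le' p hp.le _ _) _
      _ = _ := by ring
  have hc_ne_top : (ENNReal.ofReal (‖h‖ ^ s) ^ p * 2 ^ p : ℝ≥0∞) ≠ ⊤ := by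
    apply ENNReal.mul_ne_top <;>
      exact ENNReal.rpow_ne_top_of_nonneg hp.le (by simp)
  have hAm : Measurable fun x : EuclideanSpace ℝ (Fin n) =>
      (ENNReal.ofReal (g j (x + h))) ^ p :=
    (ENNReal.continuous_rpow_const.measurable).comp
      (((hgmeas j).comp (measurable_add_const h)).ennreal_ofReal)
  calc (∫⁻ x in {x | x ∈ S ∧ x + h ∈ S}, ENNReal.ofReal |u (x + h) - u x| ^ p ∂volume) ^ (1/p)
      ≤ (∫⁻ x in T, (ENNReal.ofReal (‖h‖ ^ s) ^ p * 2 ^ p) *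
          ((ENNReal.ofReal (g j (x + h))) ^ p + (ENNReal.ofReal (g j x)) ^ p) ∂volume) ^ (1/p) := by
        rw [hset]
        exact ENNReal.rpow_le_rpow (lintegral_mono_ae hae) (by positivity)
    _ = ((ENNReal.ofReal (‖h‖ ^ s) ^ p * 2 ^ p) *
          ∫⁻ x in T, ((ENNReal.ofReal (g j (x + h))) ^ p + (ENNReal.ofReal (g j x)) ^ p)
            ∂volume) ^ (1/p) := by
        rw [lintegral_const_mul' _ _ hc_ne_top]
    _ ≤ ((ENNReal.ofReal (‖h‖ ^ s) ^ p * 2 ^ p) * (Bp + Bp)) ^ (1/p) := by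
        apply ENNReal.rpow_le_rpow _ (by positivity)
        apply mul_le_mul_right
        rw [lintegral_add_left hAm]
        apply add_le_add
        · calc ∫⁻ x in T, (ENNReal.ofReal (g j (x + h))) ^ p ∂volume
              ≤ ∫⁻ x in (· + h) ⁻¹' S, (ENNReal.ofReal (g j (x + h))) ^ p ∂volume :=
                lintegral_mono_set inter_subset_right
            _ = Bp := hmp.setLIntegral_comp_preimage_emb hemb (fun y => (ENNReal.ofReal (g j y)) ^ p) S
        · exact lintegral_mono_set inter_subset_left
    _ = 2 * (2:ℝ≥0∞) ^ (1/p) * ENNReal.ofReal (‖h‖ ^ s) * LpS volume p S (g j) := by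
        rw [← hBpLp, ← two_mul]
        rw [ENNReal.mul_rpow_of_nonneg _ _ (by positivity : (0:ℝ) ≤ 1/p),
          ENNReal.mul_rpow_of_nonneg _ _ (by positivity : (0:ℝ) ≤ 1/p),
          ENNReal.mul_rpow_of_nonneg _ _ (by positivity : (0:ℝ) ≤ 1/p),
          ← ENNReal.rpow_mul, ← ENNReal.rpow_mul,
          mul_one_div_cancel hp.ne', ENNReal.rpow_one, ENNReal.rpow_one]
        ring

private lemma omega_le {s p : ℝ} (hs0 : 0 < s) (hp : 0 < p)
    {S : Set (EuclideanSpace ℝ (Fin n))} (hS : MeasurableSet S)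
    {u : EuclideanSpace ℝ (Fin n) → ℝ} {g : ℤ → EuclideanSpace ℝ (Fin n) → ℝ}
    (hg : IsFracGrad volume s S u g) {t : ℝ} (ht : 0 < t) :
    omegaMod S u p t ≤ 2 * (2:ℝ≥0∞) ^ (1/p) *
      ⨆ (j : ℤ) (_ : (2:ℝ) ^ (-(j:ℝ) - 1) ≤ t),
        ENNReal.ofReal ((min t ((2:ℝ) ^ (-(j:ℝ)))) ^ s) * LpS volume p S (g j) := by
  rw [omegaMod]
  apply iSup_le
  rintro ⟨h, hh⟩
  dsimp only
  by_cases h0 : h = 0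
  · subst h0
    simp only [add_zero, sub_self, abs_zero, ENNReal.ofReal_zero]
    rw [ENNReal.zero_rpow_of_pos hp, lintegral_zero, ENNReal.zero_rpow_of_pos (by positivity)]
    exact zero_le
  · have hpos : 0 < ‖h‖ := norm_pos_iff.2 h0
    set r : ℝ := Real.logb 2 ‖h‖ with hr
    set j : ℤ := -⌊r⌋ - 1 with hj
    have hcast : -(j:ℝ) - 1 = (⌊r⌋ : ℝ) := by rw [hj]; push_cast; ring
    have hcast2 : -(j:ℝ) = (⌊r⌋ : ℝ) + 1 := by rw [hj]; push_cast; ring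
    have hhr : ‖h‖ = (2:ℝ) ^ r := (Real.rpow_logb (by norm_num) (by norm_num) hpos).symm
    have hj1 : (2:ℝ) ^ (-(j:ℝ) - 1) ≤ ‖h‖ := by
      rw [hcast, hhr]
      exact Real.rpow_le_rpow_of_exponent_le (by norm_num) (Int.floor_le r)
    have hj2 : ‖h‖ < (2:ℝ) ^ (-(j:ℝ)) := by
      rw [hcast2, hhr]
      exact Real.rpow_lt_rpow_of_exponent_lt (by norm_num) (Int.lt_floor_add_one r)
    calc _ ≤ 2 * (2:ℝ≥0∞) ^ (1/p) * ENNReal.ofReal (‖h‖ ^ s) * LpS volume p S (g j) :=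
          core_estimate hp hS hg h j hj1 hj2
      _ ≤ _ := by
          rw [mul_assoc]
          apply mul_le_mul_right
          have hle : ENNReal.ofReal (‖h‖ ^ s) ≤
              ENNReal.ofReal ((min t ((2:ℝ) ^ (-(j:ℝ)))) ^ s) :=
            ENNReal.ofReal_le_ofReal
              (Real.rpow_le_rpow hpos.le (le_min hh hj2.le) hs0.le)
          refine le_trans (mul_le_mul_left hle _) ?_
          exact le_iSup₂ (f := fun (j : ℤ) (_ : (2:ℝ) ^ (-(j:ℝ) - 1) ≤ t) =>
            ENNReal.ofReal ((min t ((2:ℝ) ^ (-(j:ℝ)))) ^ s) * LpS volume p S (g j))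
            j (hj1.trans hh)

private lemma geom_bound {a : ℝ} (ha : 0 < a) (j : ℤ) :
    (∑' k : ℕ, if (k:ℤ) ≤ j then ENNReal.ofReal ((2:ℝ) ^ (((k:ℝ) + 1) * a)) else 0)
      ≤ ENNReal.ofReal ((2:ℝ) ^ (((j:ℝ) + 1) * a)) *
        (1 - ENNReal.ofReal ((2:ℝ) ^ (-a)))⁻¹ := by
  rcases lt_or_ge j 0 with hj | hj
  · have hz : ∀ k : ℕ, (if (k:ℤ) ≤ j then ENNReal.ofReal ((2:ℝ) ^ (((k:ℝ) + 1) * a)) else 0)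
        = 0 := fun k => if_neg (by omega)
    rw [tsum_congr hz, tsum_zero]
    exact zero_le
  · set J := j.toNat with hJ
    have hjJ : (J : ℤ) = j := Int.toNat_of_nonneg hj
    have hjJR : (J : ℝ) = (j : ℝ) := by exact_mod_cast congrArg (Int.cast : ℤ → ℝ) hjJ
    have hsum : (∑' k : ℕ, if (k:ℤ) ≤ j then ENNReal.ofReal ((2:ℝ) ^ (((k:ℝ)+1)*a)) else 0)
        = ∑ k ∈ Finset.range (J+1), ENNReal.ofReal ((2:ℝ) ^ (((k:ℝ)+1)*a)) := by
      rw [tsum_eq_sum (s := Finset.range (J+1))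
        (fun k hk => if_neg (fun hc => hk (Finset.mem_range.2 (by omega))))]
      exact Finset.sum_congr rfl fun k hk => if_pos (by
        have := Finset.mem_range.1 hk; omega)
    rw [hsum, ← Finset.sum_range_reflect]
    have hterm : ∀ k ∈ Finset.range (J+1),
        ENNReal.ofReal ((2:ℝ) ^ ((((J + 1 - 1 - k : ℕ):ℝ)+1)*a)) ≤
          ENNReal.ofReal ((2:ℝ) ^ (((j:ℝ) + 1) * a)) * (ENNReal.ofReal ((2:ℝ) ^ (-a))) ^ k := by
      intro k hk
      have hkJ : k ≤ J := by have := Finset.mem_range.1 hk; omega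
      have hcast : ((J + 1 - 1 - k : ℕ) : ℝ) = (J : ℝ) - (k : ℝ) := by
        have : (J + 1 - 1 - k : ℕ) = J - k := by omega
        rw [this, Nat.cast_sub hkJ]
      apply le_of_eq
      rw [← ENNReal.ofReal_pow (Real.rpow_nonneg (by norm_num) _),
        ← ENNReal.ofReal_mul (Real.rpow_nonneg (by norm_num) _),
        ← Real.rpow_natCast ((2:ℝ) ^ (-a)) k, ← Real.rpow_mul (by norm_num : (0:ℝ) ≤ 2),
        ← Real.rpow_add (by norm_num : (0:ℝ) < 2)]
      congr 1
      rw [hcast, hjJR]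
      ring
    calc ∑ k ∈ Finset.range (J+1),
          ENNReal.ofReal ((2:ℝ) ^ ((((J + 1 - 1 - k : ℕ):ℝ)+1)*a))
        ≤ ∑ k ∈ Finset.range (J+1), ENNReal.ofReal ((2:ℝ) ^ (((j:ℝ)+1)*a)) *
            (ENNReal.ofReal ((2:ℝ) ^ (-a))) ^ k := Finset.sum_le_sum hterm
      _ = ENNReal.ofReal ((2:ℝ) ^ (((j:ℝ)+1)*a)) *
            ∑ k ∈ Finset.range (J+1), (ENNReal.ofReal ((2:ℝ) ^ (-a))) ^ k := by
          rw [← Finset.mul_sum]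
      _ ≤ ENNReal.ofReal ((2:ℝ) ^ (((j:ℝ)+1)*a)) *
            ∑' k : ℕ, (ENNReal.ofReal ((2:ℝ) ^ (-a))) ^ k :=
          mul_le_mul_right (ENNReal.sum_le_tsum _) _
      _ = _ := by rw [ENNReal.tsum_geometric]

private lemma tail_top_le {s p : ℝ} (hs0 : 0 < s) (hp : 0 < p)
    {S : Set (EuclideanSpace ℝ (Fin n))} (hS : MeasurableSet S)
    {u : EuclideanSpace ℝ (Fin n) → ℝ} {g : ℤ → EuclideanSpace ℝ (Fin n) → ℝ}
    (hg : IsFracGrad volume s S u g) :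
    (⨆ t : {t : ℝ // 0 < t ∧ t < 1},
        ENNReal.ofReal ((t:ℝ) ^ (-s)) * omegaMod S u p (t:ℝ))
      ≤ 2 * (2:ℝ≥0∞) ^ (1/p) * besovGradNorm volume p ⊤ S g := by
  apply iSup_le
  rintro ⟨t, ht0, ht1⟩
  dsimp only
  have hA : besovGradNorm volume p ⊤ S g = ⨆ k, LpS volume p S (g k) := by
    rw [besovGradNorm, lqNorm, if_pos rfl]
  calc ENNReal.ofReal (t ^ (-s)) * omegaMod S u p t
      ≤ ENNReal.ofReal (t ^ (-s)) * (2 * (2:ℝ≥0∞) ^ (1/p) *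
          (ENNReal.ofReal (t ^ s) * ⨆ k, LpS volume p S (g k))) := by
        apply mul_le_mul_right
        refine (omega_le hs0 hp hS hg ht0).trans (mul_le_mul_right ?_ _)
        refine iSup₂_le fun j hj => ?_
        have h1 : ENNReal.ofReal ((min t ((2:ℝ) ^ (-(j:ℝ)))) ^ s) ≤ ENNReal.ofReal (t ^ s) :=
          ENNReal.ofReal_le_ofReal (Real.rpow_le_rpow
            (le_min ht0.le (Real.rpow_nonneg (by norm_num) _)) (min_le_left _ _) hs0.le)
        exact mul_le_mul' h1 (le_iSup (fun k => LpS volume p S (g k)) j)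
    _ = 2 * (2:ℝ≥0∞) ^ (1/p) * ((ENNReal.ofReal (t ^ (-s)) * ENNReal.ofReal (t ^ s)) *
          ⨆ k, LpS volume p S (g k)) := by ring
    _ ≤ 2 * (2:ℝ≥0∞) ^ (1/p) * besovGradNorm volume p ⊤ S g := by
        rw [hA, ← ENNReal.ofReal_mul (Real.rpow_nonneg ht0.le _), ← Real.rpow_add ht0,
          neg_add_cancel, Real.rpow_zero, ENNReal.ofReal_one, one_mul]

private lemma tail_fin_le {s p : ℝ} {q : ℝ≥0∞} (hs0 : 0 < s) (hp : 0 < p)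
    (hq0 : q ≠ 0) (hqt : q ≠ ⊤)
    {S : Set (EuclideanSpace ℝ (Fin n))} (hS : MeasurableSet S)
    {u : EuclideanSpace ℝ (Fin n) → ℝ} {g : ℤ → EuclideanSpace ℝ (Fin n) → ℝ}
    (hg : IsFracGrad volume s S u g) :
    (∫⁻ t in Ioo (0:ℝ) 1, (ENNReal.ofReal (t ^ (-s)) * omegaMod S u p t) ^ q.toReal
        * ENNReal.ofReal t⁻¹ ∂volume) ^ (1 / q.toReal)
      ≤ 2 * (2:ℝ≥0∞) ^ (1/p) *
          ((1 - ENNReal.ofReal ((2:ℝ) ^ (-(s * q.toReal))))⁻¹) ^ (1 / q.toReal) *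
          ENNReal.ofReal ((2:ℝ) ^ s) * besovGradNorm volume p q S g := by
  set q₀ := q.toReal with hq₀def
  have hq₀ : 0 < q₀ := ENNReal.toReal_pos hq0 hqt
  set a : ℝ := s * q₀ with hadef
  have ha : 0 < a := mul_pos hs0 hq₀
  set M0 : ℝ≥0∞ := 2 * (2:ℝ≥0∞) ^ (1/p) with hM0
  set b : ℤ → ℝ≥0∞ := fun k => LpS volume p S (g k) with hb
  set w : ℤ → ℝ≥0∞ := fun j => (ENNReal.ofReal ((2:ℝ) ^ (-(j:ℝ) * s)) * b j) ^ q₀ with hw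
  set f' : ℕ → ℤ → ℝ≥0∞ := fun k j => if (k:ℤ) ≤ j then w j else 0 with hf'
  set c : ℕ → ℝ≥0∞ := fun k =>
    (ENNReal.ofReal ((2:ℝ) ^ (((k:ℝ)+1)*s)) * M0) ^ q₀ * (∑' j, f' k j) *
      ENNReal.ofReal ((2:ℝ) ^ ((k:ℝ)+1)) with hc
  set K : ℝ≥0∞ := (1 - ENNReal.ofReal ((2:ℝ) ^ (-a)))⁻¹ with hK
  have hpoint : ∀ t ∈ Ioo (0:ℝ) 1,
      (ENNReal.ofReal (t ^ (-s)) * omegaMod S u p t) ^ q₀ * ENNReal.ofReal t⁻¹ ≤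
        ∑' k : ℕ,
          (Ico ((2:ℝ) ^ (-(k:ℝ)-1)) ((2:ℝ) ^ (-(k:ℝ)))).indicator (fun _ => c k) t := by
    rintro t ⟨ht0, ht1⟩
    set r : ℝ := Real.logb 2 t with hr
    set j' : ℤ := -⌊r⌋ - 1 with hj'
    have hcast : -(j':ℝ) - 1 = (⌊r⌋ : ℝ) := by rw [hj']; push_cast; ring
    have hcast2 : -(j':ℝ) = (⌊r⌋ : ℝ) + 1 := by rw [hj']; push_cast; ring
    have htr : t = (2:ℝ) ^ r := (Real.rpow_logb (by norm_num) (by norm_num) ht0).symm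
    have hk1 : (2:ℝ) ^ (-(j':ℝ) - 1) ≤ t := by
      rw [hcast, htr]; exact Real.rpow_le_rpow_of_exponent_le (by norm_num) (Int.floor_le r)
    have hk2 : t < (2:ℝ) ^ (-(j':ℝ)) := by
      rw [hcast2, htr]
      exact Real.rpow_lt_rpow_of_exponent_lt (by norm_num) (Int.lt_floor_add_one r)
    have hj'0 : 0 ≤ j' := by
      by_contra hcon
      push_neg at hcon
      have h1 : (1:ℝ) ≤ (2:ℝ) ^ (-(j':ℝ) - 1) := by
        rw [show (1:ℝ) = (2:ℝ) ^ (0:ℝ) by simp]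
        apply Real.rpow_le_rpow_of_exponent_le (by norm_num)
        have hj1' : (j':ℝ) ≤ -1 := by
          have hle : j' ≤ -1 := by omega
          exact_mod_cast hle
        linarith
      linarith
    set k : ℕ := j'.toNat with hkdef
    have hkj' : (k:ℤ) = j' := Int.toNat_of_nonneg hj'0
    have hkR : (k:ℝ) = (j':ℝ) := by exact_mod_cast congrArg (Int.cast : ℤ → ℝ) hkj'
    have htmem : t ∈ Ico ((2:ℝ) ^ (-(k:ℝ)-1)) ((2:ℝ) ^ (-(k:ℝ))) := by
      rw [mem_Ico, hkR]; exact ⟨hk1, hk2⟩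
    have homega : omegaMod S u p t ≤ M0 * (∑' j, f' k j) ^ (1/q₀) := by
      refine (omega_le hs0 hp hS hg ht0).trans (mul_le_mul_right ?_ _)
      refine iSup₂_le fun j hj => ?_
      have hkj : (k:ℤ) ≤ j := by
        have hlt : (2:ℝ) ^ (-(j:ℝ)-1) < (2:ℝ) ^ (-(k:ℝ)) :=
          lt_of_le_of_lt hj (by rw [hkR]; exact hk2)
        have h2 := (Real.rpow_lt_rpow_left_iff (by norm_num : (1:ℝ) < 2)).1 hlt
        have h3 : (k:ℝ) < (j:ℝ) + 1 := by linarith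
        exact_mod_cast Int.lt_add_one_iff.1 (by exact_mod_cast h3)
      have hterm : ENNReal.ofReal ((min t ((2:ℝ) ^ (-(j:ℝ)))) ^ s) * b j ≤ (f' k j) ^ (1/q₀) := by
        have hfkj : f' k j = w j := if_pos hkj
        rw [hfkj, hw]
        dsimp only
        rw [← ENNReal.rpow_mul, mul_one_div_cancel hq₀.ne', ENNReal.rpow_one]
        apply mul_le_mul_left
        apply ENNReal.ofReal_le_ofReal
        rw [Real.rpow_mul (by norm_num : (0:ℝ) ≤ 2)]
        exact Real.rpow_le_rpow (le_min ht0.le (Real.rpow_nonneg (by norm_num) _))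
          (min_le_right _ _) hs0.le
      exact hterm.trans (ENNReal.rpow_le_rpow (ENNReal.le_tsum j) (by positivity))
    have ht1' : ENNReal.ofReal (t ^ (-s)) ≤ ENNReal.ofReal ((2:ℝ) ^ (((k:ℝ)+1)*s)) := by
      apply ENNReal.ofReal_le_ofReal
      have hle : t ^ (-s) ≤ ((2:ℝ) ^ (-(k:ℝ)-1)) ^ (-s) :=
        Real.rpow_le_rpow_of_nonpos (Real.rpow_pos_of_pos (by norm_num) _) htmem.1
          (by linarith)
      refine hle.trans (le_of_eq ?_)
      rw [← Real.rpow_mul (by norm_num : (0:ℝ) ≤ 2)]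
      congr 1; ring
    have ht2' : ENNReal.ofReal t⁻¹ ≤ ENNReal.ofReal ((2:ℝ) ^ ((k:ℝ)+1)) := by
      apply ENNReal.ofReal_le_ofReal
      have h2pos : (0:ℝ) < (2:ℝ) ^ (-(k:ℝ)-1) := Real.rpow_pos_of_pos (by norm_num) _
      have hle : t⁻¹ ≤ ((2:ℝ) ^ (-(k:ℝ)-1))⁻¹ := by
        apply inv_anti₀ h2pos htmem.1
      refine hle.trans (le_of_eq ?_)
      rw [show (-(k:ℝ)-1) = -((k:ℝ)+1) by ring, Real.rpow_neg (by norm_num : (0:ℝ) ≤ 2),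
        inv_inv]
    calc (ENNReal.ofReal (t ^ (-s)) * omegaMod S u p t) ^ q₀ * ENNReal.ofReal t⁻¹
        ≤ (ENNReal.ofReal ((2:ℝ) ^ (((k:ℝ)+1)*s)) * (M0 * (∑' j, f' k j) ^ (1/q₀))) ^ q₀ *
            ENNReal.ofReal ((2:ℝ) ^ ((k:ℝ)+1)) := by
          exact mul_le_mul'
            (ENNReal.rpow_le_rpow (mul_le_mul' ht1' homega) hq₀.le) ht2'
      _ = c k := by
          rw [hc]
          dsimp only
          rw [← mul_assoc, ENNReal.mul_rpow_of_nonneg _ _ hq₀.le,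
            ← ENNReal.rpow_mul, one_div_mul_cancel hq₀.ne', ENNReal.rpow_one]
      _ ≤ _ := by
          refine le_trans (le_of_eq (Set.indicator_of_mem htmem (fun _ => c k)).symm) ?_
          exact ENNReal.le_tsum k
  have hint : (∫⁻ t in Ioo (0:ℝ) 1, (ENNReal.ofReal (t ^ (-s)) * omegaMod S u p t) ^ q₀
      * ENNReal.ofReal t⁻¹ ∂volume) ≤ ∑' k : ℕ, c k * ENNReal.ofReal ((2:ℝ) ^ (-(k:ℝ)-1)) := by
    have step1 : (∫⁻ t in Ioo (0:ℝ) 1, (ENNReal.ofReal (t ^ (-s)) * omegaMod S u p t) ^ q₀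
        * ENNReal.ofReal t⁻¹ ∂volume) ≤ ∫⁻ t in Ioo (0:ℝ) 1, (∑' k : ℕ,
          (Ico ((2:ℝ) ^ (-(k:ℝ)-1)) ((2:ℝ) ^ (-(k:ℝ)))).indicator (fun _ => c k) t)
            ∂volume := by
      apply lintegral_mono_ae
      filter_upwards [ae_restrict_mem measurableSet_Ioo] with t ht using hpoint t ht
    refine step1.trans ((setLIntegral_le_lintegral _ _).trans ?_)
    rw [lintegral_tsum (fun k => (measurable_const.indicator measurableSet_Ico).aemeasurable)]
    refine Summable.tsum_le_tsum (fun k => ?_) ENNReal.summable ENNReal.summable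
    rw [lintegral_indicator measurableSet_Ico, setLIntegral_const, Real.volume_Ico]
    apply le_of_eq
    have h2eq : (2:ℝ) ^ (-(k:ℝ)) = (2:ℝ) ^ (-(k:ℝ)-1) * 2 := by
      rw [← Real.rpow_add_one (by norm_num : (2:ℝ) ≠ 0)]
      congr 1; ring
    have : (2:ℝ) ^ (-(k:ℝ)) - (2:ℝ) ^ (-(k:ℝ)-1) = (2:ℝ) ^ (-(k:ℝ)-1) := by
      rw [h2eq]; ring
    rw [this]
  have hck : ∀ k : ℕ, c k * ENNReal.ofReal ((2:ℝ) ^ (-(k:ℝ)-1)) =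
      M0 ^ q₀ * ∑' j : ℤ,
        (if (k:ℤ) ≤ j then ENNReal.ofReal ((2:ℝ) ^ (((k:ℝ)+1)*a)) else 0) * w j := by
    intro k
    rw [hc]
    dsimp only
    have e1 : ENNReal.ofReal ((2:ℝ) ^ ((k:ℝ)+1)) * ENNReal.ofReal ((2:ℝ) ^ (-(k:ℝ)-1))
        = 1 := by
      rw [← ENNReal.ofReal_mul (Real.rpow_nonneg (by norm_num) _),
        ← Real.rpow_add (by norm_num : (0:ℝ) < 2),
        show ((k:ℝ)+1) + (-(k:ℝ)-1) = (0:ℝ) by ring, Real.rpow_zero, ENNReal.ofReal_one]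
    have e2 : (ENNReal.ofReal ((2:ℝ) ^ (((k:ℝ)+1)*s)) * M0) ^ q₀
        = ENNReal.ofReal ((2:ℝ) ^ (((k:ℝ)+1)*a)) * M0 ^ q₀ := by
      rw [ENNReal.mul_rpow_of_nonneg _ _ hq₀.le,
        ENNReal.ofReal_rpow_of_pos (Real.rpow_pos_of_pos (by norm_num) _),
        ← Real.rpow_mul (by norm_num : (0:ℝ) ≤ 2),
        show (((k:ℝ)+1)*s)*q₀ = ((k:ℝ)+1)*a by rw [hadef]; ring]
    have e3 : ENNReal.ofReal ((2:ℝ) ^ (((k:ℝ)+1)*a)) * (∑' j, f' k j)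
        = ∑' j : ℤ, (if (k:ℤ) ≤ j then ENNReal.ofReal ((2:ℝ) ^ (((k:ℝ)+1)*a)) else 0)
            * w j := by
      rw [← ENNReal.tsum_mul_left]
      refine tsum_congr fun j => ?_
      rw [hf']
      dsimp only
      by_cases hc' : (k:ℤ) ≤ j <;> simp [hc']
    calc (ENNReal.ofReal ((2:ℝ) ^ (((k:ℝ)+1)*s)) * M0) ^ q₀ * (∑' j, f' k j) *
          ENNReal.ofReal ((2:ℝ) ^ ((k:ℝ)+1)) * ENNReal.ofReal ((2:ℝ) ^ (-(k:ℝ)-1))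
        = (ENNReal.ofReal ((2:ℝ) ^ (((k:ℝ)+1)*s)) * M0) ^ q₀ * (∑' j, f' k j) *
            (ENNReal.ofReal ((2:ℝ) ^ ((k:ℝ)+1)) * ENNReal.ofReal ((2:ℝ) ^ (-(k:ℝ)-1))) := by
          ring
      _ = ENNReal.ofReal ((2:ℝ) ^ (((k:ℝ)+1)*a)) * M0 ^ q₀ * (∑' j, f' k j) := by
          rw [e1, mul_one, e2]
      _ = M0 ^ q₀ * (ENNReal.ofReal ((2:ℝ) ^ (((k:ℝ)+1)*a)) * (∑' j, f' k j)) := by ring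
      _ = _ := by rw [e3]
  have hsum : (∑' k : ℕ, c k * ENNReal.ofReal ((2:ℝ) ^ (-(k:ℝ)-1)))
      ≤ M0 ^ q₀ * (K * (ENNReal.ofReal ((2:ℝ) ^ a) * ∑' j : ℤ, (b j) ^ q₀)) := by
    rw [tsum_congr hck, ENNReal.tsum_mul_left]
    apply mul_le_mul_right
    rw [ENNReal.tsum_comm]
    have hj1 : ∀ j : ℤ, (∑' k : ℕ,
        (if (k:ℤ) ≤ j then ENNReal.ofReal ((2:ℝ) ^ (((k:ℝ)+1)*a)) else 0) * w j)
          ≤ ENNReal.ofReal ((2:ℝ) ^ (((j:ℝ)+1)*a)) * K * w j := by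
      intro j
      rw [ENNReal.tsum_mul_right]
      exact mul_le_mul_left (geom_bound ha j) _
    refine (Summable.tsum_le_tsum hj1 ENNReal.summable ENNReal.summable).trans (le_of_eq ?_)
    have hwj : ∀ j : ℤ, ENNReal.ofReal ((2:ℝ) ^ (((j:ℝ)+1)*a)) * K * w j
        = K * (ENNReal.ofReal ((2:ℝ) ^ a) * (b j) ^ q₀) := by
      intro j
      rw [hw]
      dsimp only
      rw [ENNReal.mul_rpow_of_nonneg _ _ hq₀.le,
        ENNReal.ofReal_rpow_of_pos (Real.rpow_pos_of_pos (by norm_num) _),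
        ← Real.rpow_mul (by norm_num : (0:ℝ) ≤ 2),
        show (-(j:ℝ)*s)*q₀ = -((j:ℝ))*a by rw [hadef]; ring]
      calc ENNReal.ofReal ((2:ℝ) ^ (((j:ℝ)+1)*a)) * K *
            (ENNReal.ofReal ((2:ℝ) ^ (-(j:ℝ)*a)) * (b j) ^ q₀)
          = K * ((ENNReal.ofReal ((2:ℝ) ^ (((j:ℝ)+1)*a)) *
              ENNReal.ofReal ((2:ℝ) ^ (-(j:ℝ)*a))) * (b j) ^ q₀) := by ring
        _ = _ := by
            rw [← ENNReal.ofReal_mul (Real.rpow_nonneg (by norm_num) _),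
              ← Real.rpow_add (by norm_num : (0:ℝ) < 2),
              show (((j:ℝ)+1)*a) + (-(j:ℝ)*a) = a by ring]
    rw [tsum_congr hwj, ENNReal.tsum_mul_left, ENNReal.tsum_mul_left]
  calc (∫⁻ t in Ioo (0:ℝ) 1, (ENNReal.ofReal (t ^ (-s)) * omegaMod S u p t) ^ q₀
        * ENNReal.ofReal t⁻¹ ∂volume) ^ (1 / q₀)
      ≤ (M0 ^ q₀ * (K * (ENNReal.ofReal ((2:ℝ) ^ a) * ∑' j : ℤ, (b j) ^ q₀))) ^ (1/q₀) :=
        ENNReal.rpow_le_rpow (hint.trans hsum) (by positivity)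
    _ = M0 * K ^ (1/q₀) * ENNReal.ofReal ((2:ℝ) ^ s) * besovGradNorm volume p q S g := by
        rw [ENNReal.mul_rpow_of_nonneg _ _ (by positivity : (0:ℝ) ≤ 1/q₀),
          ENNReal.mul_rpow_of_nonneg _ _ (by positivity : (0:ℝ) ≤ 1/q₀),
          ENNReal.mul_rpow_of_nonneg _ _ (by positivity : (0:ℝ) ≤ 1/q₀),
          ← ENNReal.rpow_mul M0, mul_one_div_cancel hq₀.ne', ENNReal.rpow_one,
          ENNReal.ofReal_rpow_of_pos (Real.rpow_pos_of_pos (by norm_num) _),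
          ← Real.rpow_mul (by norm_num : (0:ℝ) ≤ 2),
          show a * (1/q₀) = s by rw [hadef]; field_simp]
        rw [besovGradNorm, lqNorm, if_neg hqt, hb]
        ring

end AuxProof

/-- On any measurable `S ⊆ ℝⁿ`, `‖u‖_{B^s_{p,q}(S)} ≤ C ‖u‖_{N^s_{p,q}(S)}`
with `C = C(n,s,p,q)`; in particular `N^s_{p,q}(S) ⊆ B^s_{p,q}(S)`. -/
theorem hajlaszBesov_subset_besov (n : ℕ) (s p : ℝ) (q : ℝ≥0∞)
    (hs0 : 0 < s) (hs1 : s < 1) (hp : 0 < p) (hq : 0 < q) :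
    ∃ C : ℝ, 0 < C ∧
      ∀ S : Set (EuclideanSpace ℝ (Fin n)), MeasurableSet S →
      ∀ u : EuclideanSpace ℝ (Fin n) → ℝ, Measurable u →
        modBesovNorm S u s p q ≤ ENNReal.ofReal C * BesovNorm volume s p q S u := by
  have hM0top : (2 * (2:ℝ≥0∞) ^ (1/p) : ℝ≥0∞) ≠ ⊤ :=
    ENNReal.mul_ne_top (by simp) (ENNReal.rpow_ne_top_of_nonneg (by positivity) (by simp))
  have hM0pos : (0:ℝ≥0∞) < 2 * (2:ℝ≥0∞) ^ (1/p) :=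
    ENNReal.mul_pos (by simp) (ENNReal.rpow_pos (by norm_num) (by simp)).ne'
  obtain ⟨C0, hC0pos, hC0top, hbound⟩ :
      ∃ C0 : ℝ≥0∞, 0 < C0 ∧ C0 ≠ ⊤ ∧
        ∀ S : Set (EuclideanSpace ℝ (Fin n)), MeasurableSet S →
        ∀ u : EuclideanSpace ℝ (Fin n) → ℝ,
        ∀ g : ℤ → EuclideanSpace ℝ (Fin n) → ℝ, IsFracGrad volume s S u g →
          (if q = ⊤ then ⨆ t : {t : ℝ // 0 < t ∧ t < 1},
              ENNReal.ofReal ((t : ℝ) ^ (-s)) * omegaMod S u p (t : ℝ)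
            else (∫⁻ t in Ioo (0:ℝ) 1,
              (ENNReal.ofReal (t ^ (-s)) * omegaMod S u p t) ^ q.toReal
                * ENNReal.ofReal t⁻¹) ^ (1 / q.toReal))
            ≤ C0 * besovGradNorm volume p q S g := by
    by_cases hqt : q = ⊤
    · subst hqt
      exact ⟨_, hM0pos, hM0top, fun S hS u g hg => by
        rw [if_pos rfl]; exact tail_top_le hs0 hp hS hg⟩
    · have hq₀ : 0 < q.toReal := ENNReal.toReal_pos hq.ne' hqt
      have ha : 0 < s * q.toReal := mul_pos hs0 hq₀
      have hrlt : ENNReal.ofReal ((2:ℝ) ^ (-(s * q.toReal))) < 1 := by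
        rw [← ENNReal.ofReal_one]
        apply ENNReal.ofReal_lt_ofReal_iff_of_nonneg (Real.rpow_nonneg (by norm_num) _) |>.2
        exact Real.rpow_lt_one_of_one_lt_of_neg (by norm_num) (by linarith)
      have hKpos : (0:ℝ≥0∞) < (1 - ENNReal.ofReal ((2:ℝ) ^ (-(s * q.toReal))))⁻¹ :=
        ENNReal.inv_pos.2 (lt_of_le_of_lt tsub_le_self (by simp)).ne
      have hKne : (1 - ENNReal.ofReal ((2:ℝ) ^ (-(s * q.toReal)))) ≠ 0 :=
        (tsub_pos_of_lt hrlt).ne'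
      have hKtop : (1 - ENNReal.ofReal ((2:ℝ) ^ (-(s * q.toReal))))⁻¹ ≠ ⊤ :=
        ENNReal.inv_ne_top.2 hKne
      refine ⟨2 * (2:ℝ≥0∞) ^ (1/p) *
          ((1 - ENNReal.ofReal ((2:ℝ) ^ (-(s * q.toReal))))⁻¹) ^ (1 / q.toReal) *
          ENNReal.ofReal ((2:ℝ) ^ s), ?_, ?_, fun S hS u g hg => by
            rw [if_neg hqt]; exact tail_fin_le hs0 hp hq.ne' hqt hS hg⟩
      · apply ENNReal.mul_pos (ENNReal.mul_pos hM0pos.ne' _).ne'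
        · exact (ENNReal.ofReal_pos.2 (Real.rpow_pos_of_pos (by norm_num) _)).ne'
        · exact (ENNReal.rpow_pos hKpos hKtop).ne'
      · exact ENNReal.mul_ne_top
          (ENNReal.mul_ne_top hM0top
            (ENNReal.rpow_ne_top_of_nonneg (by positivity) hKtop))
          ENNReal.ofReal_ne_top
  have hC0top' : (1 + C0 : ℝ≥0∞) ≠ ⊤ := by
    rw [ENNReal.add_ne_top]; exact ⟨by simp, hC0top⟩
  refine ⟨(1 + C0).toReal, ENNReal.toReal_pos (by simp) hC0top', ?_⟩
  intro S hS u _hu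
  set I : ℝ≥0∞ := ⨅ (g : ℤ → EuclideanSpace ℝ (Fin n) → ℝ)
      (_ : IsFracGrad volume s S u g), besovGradNorm volume p q S g with hI
  have htail : (if q = ⊤ then ⨆ t : {t : ℝ // 0 < t ∧ t < 1},
        ENNReal.ofReal ((t : ℝ) ^ (-s)) * omegaMod S u p (t : ℝ)
      else (∫⁻ t in Ioo (0:ℝ) 1,
        (ENNReal.ofReal (t ^ (-s)) * omegaMod S u p t) ^ q.toReal
          * ENNReal.ofReal t⁻¹) ^ (1 / q.toReal)) ≤ C0 * I := by
    rw [hI, ENNReal.mul_iInf_of_ne hC0pos.ne' hC0top]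
    refine le_iInf fun g => ?_
    rw [ENNReal.mul_iInf_of_ne hC0pos.ne' hC0top]
    exact le_iInf fun hg => hbound S hS u g hg
  calc modBesovNorm S u s p q ≤ LpS volume p S u + C0 * I := by
        rw [modBesovNorm]; exact add_le_add_right htail _
    _ ≤ (1 + C0) * LpS volume p S u + (1 + C0) * I := by
        apply add_le_add
        · conv_lhs => rw [← one_mul (LpS volume p S u)]
          exact mul_le_mul_left le_self_add _
        · exact mul_le_mul_left le_add_self _
    _ = (1 + C0) * (LpS volume p S u + I) := (mul_add _ _ _).symm
    _ = ENNReal.ofReal ((1 + C0).toReal) * BesovNorm volume s p q S u := by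
        rw [ENNReal.ofReal_toReal hC0top', BesovNorm, hI]

end
end
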